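/- The handshaking expansion theorem for ACP_drt^τ: assuming handshaking communication (γ(γ(a,b),c) = δ for all actions a,b,c), the axioms of standard concurrency, and the handshaking axiom ν(x | y | z) = \underline{δ}, for all n > 2 the equation x₁ ∥ ⋯ ∥ xₙ = Σ_{1≤i≤n} xᵢ ⌊ (∥_{j≠i} x_j) + Σ_{1≤i<j≤n} (xᵢ | x_j) ⌊ (∥_{k≠i, k≠j} x_k) is derivable. -/

import Mathlib

set_option autoImplicit true

/-- Actions extended with the silent action τ and deadlock δ. -/
inductive ATD (A : Type) : Type where
  | act : A → ATD A
  | tau : ATD A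
  | delta : ATD A

/-- Terms of ACP_drt^τ with guarded recursion (variables are natural numbers,
a recursive specification is a total function from variables to terms). -/
inductive Tm (A : Type) : Type where
  | und : ATD A → Tm A            -- undelayable action/silent step/deadlock constant
  | alt : Tm A → Tm A → Tm A      -- alternative composition +
  | seq : Tm A → Tm A → Tm A      -- sequential composition ·
  | delay : Tm A → Tm A           -- one-time-slice delay σ
  | par : Tm A → Tm A → Tm A      -- parallel composition ∥
  | lm : Tm A → Tm A → Tm A       -- left merge ⌊
  | cm : Tm A → Tm A → Tm A       -- communication merge |
  | encap : Set A → Tm A → Tm A   -- encapsulation ∂_H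
  | abstr : Set A → Tm A → Tm A   -- abstraction τ_I
  | timeout : Tm A → Tm A         -- current-time-slice time-out ν
  | var : ℕ → Tm A                -- variable
  | recc : (ℕ → Tm A) → ℕ → Tm A   -- recursion constant ⟨X|E⟩
  | shift : Tm A → Tm A           -- one-time-slice shift ω (auxiliary)
  | tfp : Tm A → Tm A             -- time-free projection π_tf (auxiliary)

namespace Tm
variable {A : Type}

/-- Apply an assignment of terms to variables (leaving recursion constants,
whose variables are bound, untouched). -/
def asg (θ : ℕ → Tm A) : Tm A → Tm A
  | und a => und a
  | alt t u => alt (asg θ t) (asg θ u)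
  | seq t u => seq (asg θ t) (asg θ u)
  | delay t => delay (asg θ t)
  | par t u => par (asg θ t) (asg θ u)
  | lm t u => lm (asg θ t) (asg θ u)
  | cm t u => cm (asg θ t) (asg θ u)
  | encap H t => encap H (asg θ t)
  | abstr I t => abstr I (asg θ t)
  | timeout t => timeout (asg θ t)
  | var X => θ X
  | recc E X => recc E X
  | shift t => shift (asg θ t)
  | tfp t => tfp (asg θ t)

/-- ⟨t|E⟩ : replace each variable Y of t by the recursion constant ⟨Y|E⟩. -/
def sub (E : ℕ → Tm A) (t : Tm A) : Tm A := asg (fun Y => recc E Y) t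

/-- n-fold one-time-slice delay σⁿ. -/
def delayN : ℕ → Tm A → Tm A
  | 0, t => t
  | n+1, t => delay (delayN n t)

/-- n-fold one-time-slice shift ωⁿ. -/
def shiftN : ℕ → Tm A → Tm A
  | 0, t => t
  | n+1, t => shift (shiftN n t)

/-- Syntactically guarded term: no abstraction operator occurs and each variable
occurrence is within a subterm a·t' (a an observable action) or σ(t'). -/
def Guarded : Tm A → Prop
  | und _ => True
  | alt t u => Guarded t ∧ Guarded u
  | seq t u => Guarded t ∧ (Guarded u ∨ ∃ a : A, t = und (ATD.act a))
  | delay _ => True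
  | par t u => Guarded t ∧ Guarded u
  | lm t u => Guarded t ∧ Guarded u
  | cm t u => Guarded t ∧ Guarded u
  | encap _ t => Guarded t
  | abstr _ _ => False
  | timeout t => Guarded t
  | var _ => False
  | recc _ _ => True
  | shift t => Guarded t
  | tfp _ => False

/-- Guarded recursive specification. -/
def GuardedSpec (E : ℕ → Tm A) : Prop := ∀ Y, Guarded (E Y)

/-- No free variables (variables inside recursion constants are bound). -/
def NoFreeVar : Tm A → Prop
  | und _ => True
  | alt t u => NoFreeVar t ∧ NoFreeVar u
  | seq t u => NoFreeVar t ∧ NoFreeVar u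
  | delay t => NoFreeVar t
  | par t u => NoFreeVar t ∧ NoFreeVar u
  | lm t u => NoFreeVar t ∧ NoFreeVar u
  | cm t u => NoFreeVar t ∧ NoFreeVar u
  | encap _ t => NoFreeVar t
  | abstr _ t => NoFreeVar t
  | timeout t => NoFreeVar t
  | var _ => False
  | recc _ _ => True
  | shift t => NoFreeVar t
  | tfp t => NoFreeVar t

/-- Proper ACP_drt^τ+REC term body: the auxiliary operators ω and π_tf do not
occur and all recursive specifications occurring in it are guarded. -/
def PT : Tm A → Prop
  | und _ => True
  | alt t u => PT t ∧ PT u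
  | seq t u => PT t ∧ PT u
  | delay t => PT t
  | par t u => PT t ∧ PT u
  | lm t u => PT t ∧ PT u
  | cm t u => PT t ∧ PT u
  | encap _ t => PT t
  | abstr _ t => PT t
  | timeout t => PT t
  | var _ => True
  | recc E _ => ∀ Y, Guarded (E Y) ∧ PT (E Y)
  | shift _ => False
  | tfp _ => False

/-- Element of 𝒫: closed ACP_drt^τ+REC term. -/
def PTm (t : Tm A) : Prop := PT t ∧ NoFreeVar t

/-- Closed ACP_drt^τ term (recursion-free, no variables, no auxiliary operators). -/
def Plain : Tm A → Prop
  | und _ => True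
  | alt t u => Plain t ∧ Plain u
  | seq t u => Plain t ∧ Plain u
  | delay t => Plain t
  | par t u => Plain t ∧ Plain u
  | lm t u => Plain t ∧ Plain u
  | cm t u => Plain t ∧ Plain u
  | encap _ t => Plain t
  | abstr _ t => Plain t
  | timeout t => Plain t
  | var _ => False
  | recc _ _ => False
  | shift _ => False
  | tfp _ => False

/-- No recursion constant occurs. -/
def RecFree : Tm A → Prop
  | und _ => True
  | alt t u => RecFree t ∧ RecFree u
  | seq t u => RecFree t ∧ RecFree u
  | delay t => RecFree t
  | par t u => RecFree t ∧ RecFree u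
  | lm t u => RecFree t ∧ RecFree u
  | cm t u => RecFree t ∧ RecFree u
  | encap _ t => RecFree t
  | abstr _ t => RecFree t
  | timeout t => RecFree t
  | var _ => True
  | recc _ _ => False
  | shift t => RecFree t
  | tfp t => RecFree t

/-- No abstraction operator occurs. -/
def AbstrFree : Tm A → Prop
  | und _ => True
  | alt t u => AbstrFree t ∧ AbstrFree u
  | seq t u => AbstrFree t ∧ AbstrFree u
  | delay t => AbstrFree t
  | par t u => AbstrFree t ∧ AbstrFree u
  | lm t u => AbstrFree t ∧ AbstrFree u
  | cm t u => AbstrFree t ∧ AbstrFree u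
  | encap _ t => AbstrFree t
  | abstr _ _ => False
  | timeout t => AbstrFree t
  | var _ => True
  | recc E _ => ∀ Y, AbstrFree (E Y)
  | shift t => AbstrFree t
  | tfp t => AbstrFree t

/-- Term of BPA_drt^τ+REC: no ∥, ⌊, |, ∂_H and no auxiliary operators. -/
def BpaP : Tm A → Prop
  | und _ => True
  | alt t u => BpaP t ∧ BpaP u
  | seq t u => BpaP t ∧ BpaP u
  | delay t => BpaP t
  | par _ _ => False
  | lm _ _ => False
  | cm _ _ => False
  | encap _ _ => False
  | abstr _ t => BpaP t
  | timeout t => BpaP t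
  | var _ => True
  | recc E _ => ∀ Y, BpaP (E Y)
  | shift _ => False
  | tfp _ => False

/-- The delayable action a = ⟨X | X = \underline{a} + σ(X)⟩. -/
def dact (a : ATD A) : Tm A := recc (fun _ => alt (und a) (delay (var 0))) 0

end Tm

/-- Finite alternative composition (the empty sum is \underline{δ}). -/
def altList {A : Type} : List (Tm A) → Tm A
  | [] => .und .delta
  | [t] => t
  | t :: ts => .alt t (altList ts)

/-- Finite parallel composition (the empty composition is \underline{δ}). -/
def parList {A : Type} : List (Tm A) → Tm A
  | [] => .und .delta
  | [t] => t
  | t :: ts => .par t (parList ts)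

/-- Basic terms over ACP_drt^τ. -/
inductive Basic {A : Type} : Tm A → Prop where
  | und (a : ATD A) : Basic (.und a)
  | pre (a : ATD A) (h : a ≠ ATD.delta) {t : Tm A} : Basic t → Basic (.seq (.und a) t)
  | delay {t : Tm A} : Basic t → Basic (.delay t)
  | alt {t u : Tm A} : Basic t → Basic u → Basic (.alt t u)

/-- ts-basic terms over ACP_drt^τ. -/
inductive TsBasic {A : Type} : Tm A → Prop where
  | und (a : ATD A) (n : ℕ) : TsBasic (Tm.delayN n (.und a))
  | pre (a : ATD A) (n : ℕ) (h : a ≠ ATD.delta) {t : Tm A} :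
      TsBasic t → TsBasic (.seq (Tm.delayN n (.und a)) t)
  | alt {t u : Tm A} : TsBasic t → TsBasic u → TsBasic (.alt t u)

/-- Linear terms. -/
inductive Linear {A : Type} : Tm A → Prop where
  | und (a : ATD A) : Linear (.und a)
  | pre (a : ATD A) (h : a ≠ ATD.delta) (X : ℕ) : Linear (.seq (.und a) (.var X))
  | delay (X : ℕ) : Linear (.delay (.var X))
  | alt {t u : Tm A} : Linear t → Linear u → Linear (.alt t u)

/-- Derivability in (conditional) equational logic from the axioms of ACP_drt^τ,
optionally (recOK) with the axioms RDP and RSP for guarded recursion, and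
optionally with additional axioms Ax. -/
inductive Deriv {A : Type} (γ : ATD A → ATD A → ATD A) (Ax : Tm A → Tm A → Prop)
    (recOK : Bool) : Tm A → Tm A → Prop where
  | refl (t) : Deriv γ Ax recOK t t
  | symm {t u} : Deriv γ Ax recOK t u → Deriv γ Ax recOK u t
  | trans {t u v} : Deriv γ Ax recOK t u → Deriv γ Ax recOK u v → Deriv γ Ax recOK t v
  | altCongr {t t' u u'} : Deriv γ Ax recOK t t' → Deriv γ Ax recOK u u' →
      Deriv γ Ax recOK (.alt t u) (.alt t' u')
  | seqCongr {t t' u u'} : Deriv γ Ax recOK t t' → Deriv γ Ax recOK u u' →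
      Deriv γ Ax recOK (.seq t u) (.seq t' u')
  | delayCongr {t t'} : Deriv γ Ax recOK t t' → Deriv γ Ax recOK (.delay t) (.delay t')
  | parCongr {t t' u u'} : Deriv γ Ax recOK t t' → Deriv γ Ax recOK u u' →
      Deriv γ Ax recOK (.par t u) (.par t' u')
  | lmCongr {t t' u u'} : Deriv γ Ax recOK t t' → Deriv γ Ax recOK u u' →
      Deriv γ Ax recOK (.lm t u) (.lm t' u')
  | cmCongr {t t' u u'} : Deriv γ Ax recOK t t' → Deriv γ Ax recOK u u' →
      Deriv γ Ax recOK (.cm t u) (.cm t' u')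
  | encapCongr (H) {t t'} : Deriv γ Ax recOK t t' →
      Deriv γ Ax recOK (.encap H t) (.encap H t')
  | abstrCongr (I) {t t'} : Deriv γ Ax recOK t t' →
      Deriv γ Ax recOK (.abstr I t) (.abstr I t')
  | timeoutCongr {t t'} : Deriv γ Ax recOK t t' →
      Deriv γ Ax recOK (.timeout t) (.timeout t')
  | shiftCongr {t t'} : Deriv γ Ax recOK t t' → Deriv γ Ax recOK (.shift t) (.shift t')
  | tfpCongr {t t'} : Deriv γ Ax recOK t t' → Deriv γ Ax recOK (.tfp t) (.tfp t')
  | extra {t u} : Ax t u → Deriv γ Ax recOK t u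
  -- A1–A7DR
  | A1 (x y) : Deriv γ Ax recOK (.alt x y) (.alt y x)
  | A2 (x y z) : Deriv γ Ax recOK (.alt (.alt x y) z) (.alt x (.alt y z))
  | A3 (x) : Deriv γ Ax recOK (.alt x x) x
  | A4 (x y z) : Deriv γ Ax recOK (.seq (.alt x y) z) (.alt (.seq x z) (.seq y z))
  | A5 (x y z) : Deriv γ Ax recOK (.seq (.seq x y) z) (.seq x (.seq y z))
  | A6DR (x) : Deriv γ Ax recOK (.alt x (.und .delta)) x
  | A7DR (x) : Deriv γ Ax recOK (.seq (.und .delta) x) (.und .delta)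
  -- DRT1, DRT2
  | DRT1 (x y) : Deriv γ Ax recOK (.alt (.delay x) (.delay y)) (.delay (.alt x y))
  | DRT2 (x y) : Deriv γ Ax recOK (.seq (.delay x) y) (.delay (.seq x y))
  -- encapsulation
  | D1DR (a : ATD A) (H : Set A) (h : ∀ b, a = ATD.act b → b ∉ H) :
      Deriv γ Ax recOK (.encap H (.und a)) (.und a)
  | D2DR (b : A) (H : Set A) (h : b ∈ H) :
      Deriv γ Ax recOK (.encap H (.und (.act b))) (.und .delta)
  | D3 (H x y) : Deriv γ Ax recOK (.encap H (.alt x y)) (.alt (.encap H x) (.encap H y))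
  | D4 (H x y) : Deriv γ Ax recOK (.encap H (.seq x y)) (.seq (.encap H x) (.encap H y))
  | DRD (H x) : Deriv γ Ax recOK (.encap H (.delay x)) (.delay (.encap H x))
  -- abstraction
  | TI1DR (a : ATD A) (I : Set A) (h : ∀ b, a = ATD.act b → b ∉ I) :
      Deriv γ Ax recOK (.abstr I (.und a)) (.und a)
  | TI2DR (b : A) (I : Set A) (h : b ∈ I) :
      Deriv γ Ax recOK (.abstr I (.und (.act b))) (.und .tau)
  | TI3 (I x y) : Deriv γ Ax recOK (.abstr I (.alt x y)) (.alt (.abstr I x) (.abstr I y))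
  | TI4 (I x y) : Deriv γ Ax recOK (.abstr I (.seq x y)) (.seq (.abstr I x) (.abstr I y))
  | DRTI (I x) : Deriv γ Ax recOK (.abstr I (.delay x)) (.delay (.abstr I x))
  -- merge
  | CM1 (x y) : Deriv γ Ax recOK (.par x y) (.alt (.alt (.lm x y) (.lm y x)) (.cm x y))
  | CM2DR (a : ATD A) (x) : Deriv γ Ax recOK (.lm (.und a) x) (.seq (.und a) x)
  | CM3DR (a : ATD A) (x y) :
      Deriv γ Ax recOK (.lm (.seq (.und a) x) y) (.seq (.und a) (.par x y))
  | DRCM1 (x y) : Deriv γ Ax recOK (.lm (.delay x) (.timeout y)) (.und .delta)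
  | DRCM2 (x y z) : Deriv γ Ax recOK (.lm (.delay x) (.alt (.timeout y) (.delay z)))
      (.delay (.lm x z))
  | CM4 (x y z) : Deriv γ Ax recOK (.lm (.alt x y) z) (.alt (.lm x z) (.lm y z))
  | CM5DR (a b : ATD A) (x) : Deriv γ Ax recOK (.cm (.seq (.und a) x) (.und b))
      (.seq (.cm (.und a) (.und b)) x)
  | CM6DR (a b : ATD A) (x) : Deriv γ Ax recOK (.cm (.und a) (.seq (.und b) x))
      (.seq (.cm (.und a) (.und b)) x)
  | CM7DR (a b : ATD A) (x y) : Deriv γ Ax recOK (.cm (.seq (.und a) x) (.seq (.und b) y))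
      (.seq (.cm (.und a) (.und b)) (.par x y))
  | DRCM3 (x y) : Deriv γ Ax recOK (.cm (.timeout x) (.delay y)) (.und .delta)
  | DRCM4 (x y) : Deriv γ Ax recOK (.cm (.delay x) (.timeout y)) (.und .delta)
  | DRCM5 (x y) : Deriv γ Ax recOK (.cm (.delay x) (.delay y)) (.delay (.cm x y))
  | CM8 (x y z) : Deriv γ Ax recOK (.cm (.alt x y) z) (.alt (.cm x z) (.cm y z))
  | CM9 (x y z) : Deriv γ Ax recOK (.cm x (.alt y z)) (.alt (.cm x y) (.cm x z))
  | CFDR (a b : ATD A) : Deriv γ Ax recOK (.cm (.und a) (.und b)) (.und (γ a b))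
  -- time-out
  | DRTO1 (a : ATD A) : Deriv γ Ax recOK (.timeout (.und a)) (.und a)
  | DRTO2 (x y) : Deriv γ Ax recOK (.timeout (.alt x y)) (.alt (.timeout x) (.timeout y))
  | DRTO3 (x y) : Deriv γ Ax recOK (.timeout (.seq x y)) (.seq (.timeout x) y)
  | DRTO4 (x) : Deriv γ Ax recOK (.timeout (.delay x)) (.und .delta)
  -- silent step
  | DRB1 (a : ATD A) : Deriv γ Ax recOK (.seq (.und a) (.und .tau)) (.und a)
  | DRB2 (a : ATD A) (x y) : Deriv γ Ax recOK
      (.seq (.und a) (.alt (.seq (.und .tau) (.alt (.timeout x) y)) (.timeout x)))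
      (.seq (.und a) (.alt (.timeout x) y))
  | DRB3 (a : ATD A) (x y) : Deriv γ Ax recOK
      (.seq (.und a) (.alt (.seq (.und .tau) (.alt (.timeout x) y)) y))
      (.seq (.und a) (.alt (.timeout x) y))
  | DRB4 (a : ATD A) (x y) : Deriv γ Ax recOK
      (.seq (.und a) (.alt (.delay (.seq (.und .tau) x)) (.timeout y)))
      (.seq (.und a) (.alt (.delay x) (.timeout y)))
  -- recursion
  | RDP (E : ℕ → Tm A) (X : ℕ) (hrec : recOK = true) (hg : Tm.GuardedSpec E) :
      Deriv γ Ax recOK (.recc E X) (Tm.sub E (E X))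
  | RSP (E : ℕ → Tm A) (θ : ℕ → Tm A) (X : ℕ) (hrec : recOK = true)
      (hg : Tm.GuardedSpec E) (h : ∀ Y, Deriv γ Ax recOK (θ Y) (Tm.asg θ (E Y))) :
      Deriv γ Ax recOK (θ X) (.recc E X)

/-- The empty set of additional axioms. -/
def NoAx {A : Type} : Tm A → Tm A → Prop := fun _ _ => False

/-! ### Two-phase structural operational semantics -/

/-- Map a transition label (A ∪ {τ}, with `none` = τ) into A ∪ {τ,δ}. -/
def toATD {A : Type} : Option A → ATD A
  | some a => ATD.act a
  | none => ATD.tau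

/-- Combination of the residues of two synchronously performed actions
(`none` stands for successful termination √). -/
def parOpt {A : Type} : Option (Tm A) → Option (Tm A) → Option (Tm A)
  | some x, some y => some (.par x y)
  | some x, none => some x
  | none, some y => some y
  | none, none => none

/-- Capability of idling till the next time slice. -/
inductive CanIdle {A : Type} : Tm A → Prop where
  | delay (t : Tm A) : CanIdle (.delay t)
  | altL {t u : Tm A} : CanIdle t → CanIdle (.alt t u)
  | altR {t u : Tm A} : CanIdle u → CanIdle (.alt t u)
  | seq {t : Tm A} (u : Tm A) : CanIdle t → CanIdle (.seq t u)
  | par {t u : Tm A} : CanIdle t → CanIdle u → CanIdle (.par t u)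
  | lm {t u : Tm A} : CanIdle t → CanIdle u → CanIdle (.lm t u)
  | cm {t u : Tm A} : CanIdle t → CanIdle u → CanIdle (.cm t u)
  | encap (H : Set A) {t : Tm A} : CanIdle t → CanIdle (.encap H t)
  | abstr (I : Set A) {t : Tm A} : CanIdle t → CanIdle (.abstr I t)
  | recc {E : ℕ → Tm A} {X : ℕ} : Tm.GuardedSpec E →
      CanIdle (Tm.sub E (E X)) → CanIdle (.recc E X)

/-- σ-transitions of the two-phase semantics (Table 3). -/
inductive SStep {A : Type} : Tm A → Tm A → Prop where
  | delay (t : Tm A) : SStep (.delay t) t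
  | altL {t t' u : Tm A} : SStep t t' → ¬ CanIdle u → SStep (.alt t u) t'
  | altR {t u u' : Tm A} : ¬ CanIdle t → SStep u u' → SStep (.alt t u) u'
  | altB {t t' u u' : Tm A} : SStep t t' → SStep u u' → SStep (.alt t u) (.alt t' u')
  | seq {t t' : Tm A} (u : Tm A) : SStep t t' → SStep (.seq t u) (.seq t' u)
  | par {t t' u u' : Tm A} : SStep t t' → SStep u u' → SStep (.par t u) (.par t' u')
  | lm {t t' u u' : Tm A} : SStep t t' → SStep u u' → SStep (.lm t u) (.lm t' u')
  | cm {t t' u u' : Tm A} : SStep t t' → SStep u u' → SStep (.cm t u) (.cm t' u')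
  | encap (H : Set A) {t t' : Tm A} : SStep t t' → SStep (.encap H t) (.encap H t')
  | abstr (I : Set A) {t t' : Tm A} : SStep t t' → SStep (.abstr I t) (.abstr I t')
  | recc {E : ℕ → Tm A} {X : ℕ} {t' : Tm A} : Tm.GuardedSpec E →
      SStep (Tm.sub E (E X)) t' → SStep (.recc E X) t'

/-- Action transitions of the two-phase semantics (Table 3); the label `none`
is the silent step τ and the target `none` is successful termination √. -/
inductive AStep {A : Type} (γ : ATD A → ATD A → ATD A) :
    Tm A → Option A → Option (Tm A) → Prop where
  | act (a : A) : AStep γ (.und (.act a)) (some a) none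
  | tau : AStep γ (.und .tau) none none
  | altL {t u ℓ o} : AStep γ t ℓ o → AStep γ (.alt t u) ℓ o
  | altR {t u ℓ o} : AStep γ u ℓ o → AStep γ (.alt t u) ℓ o
  | seqStep {t t' u ℓ} : AStep γ t ℓ (some t') → AStep γ (.seq t u) ℓ (some (.seq t' u))
  | seqTerm {t u ℓ} : AStep γ t ℓ none → AStep γ (.seq t u) ℓ (some u)
  | parL {t t' u ℓ} : AStep γ t ℓ (some t') → AStep γ (.par t u) ℓ (some (.par t' u))
  | parR {t u u' ℓ} : AStep γ u ℓ (some u') → AStep γ (.par t u) ℓ (some (.par t u'))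
  | parLT {t u ℓ} : AStep γ t ℓ none → AStep γ (.par t u) ℓ (some u)
  | parRT {t u ℓ} : AStep γ u ℓ none → AStep γ (.par t u) ℓ (some t)
  | parC {t u ℓ₁ ℓ₂ ℓ o₁ o₂} : AStep γ t ℓ₁ o₁ → AStep γ u ℓ₂ o₂ →
      γ (toATD ℓ₁) (toATD ℓ₂) = toATD ℓ → AStep γ (.par t u) ℓ (parOpt o₁ o₂)
  | lmStep {t t' u ℓ} : AStep γ t ℓ (some t') → AStep γ (.lm t u) ℓ (some (.par t' u))
  | lmTerm {t u ℓ} : AStep γ t ℓ none → AStep γ (.lm t u) ℓ (some u)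
  | cmC {t u ℓ₁ ℓ₂ ℓ o₁ o₂} : AStep γ t ℓ₁ o₁ → AStep γ u ℓ₂ o₂ →
      γ (toATD ℓ₁) (toATD ℓ₂) = toATD ℓ → AStep γ (.cm t u) ℓ (parOpt o₁ o₂)
  | encap (H : Set A) {t ℓ o} : AStep γ t ℓ o → (∀ b, ℓ = some b → b ∉ H) →
      AStep γ (.encap H t) ℓ (Option.map (Tm.encap H) o)
  | abstrKeep (I : Set A) {t ℓ o} : AStep γ t ℓ o → (∀ b, ℓ = some b → b ∉ I) →
      AStep γ (.abstr I t) ℓ (Option.map (Tm.abstr I) o)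
  | abstrHide (I : Set A) {t b o} : AStep γ t (some b) o → b ∈ I →
      AStep γ (.abstr I t) none (Option.map (Tm.abstr I) o)
  | timeout {t ℓ o} : AStep γ t ℓ o → AStep γ (.timeout t) ℓ o
  | recc {E X ℓ o} : Tm.GuardedSpec E → AStep γ (Tm.sub E (E X)) ℓ o →
      AStep γ (.recc E X) ℓ o

/-- Labels of the two-phase semantics: A ∪ {τ} ∪ {σ}. -/
inductive L2 (A : Type) where
  | act : A → L2 A
  | tau : L2 A
  | sig : L2 A

/-- Combined transition relation of the two-phase semantics. -/
def Step {A : Type} (γ : ATD A → ATD A → ATD A) (t : Tm A) :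
    L2 A → Option (Tm A) → Prop
  | .act a, o => AStep γ t (some a) o
  | .tau, o => AStep γ t none o
  | .sig, o => ∃ t', o = some t' ∧ SStep t t'

/-- A silent path t₂ = t*₀ →τ t*₁ →τ ⋯ →τ t*ₙ with R(t₁, t*ᵢ₊₁) at every step. -/
inductive TauSeq {A : Type} (γ : ATD A → ATD A → ATD A)
    (R : Option (Tm A) → Option (Tm A) → Prop) (t1 t2 : Tm A) : Tm A → Prop where
  | refl : TauSeq γ R t1 t2 t2
  | step {u v : Tm A} : TauSeq γ R t1 t2 u → AStep γ u none (some v) →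
      R (some t1) (some v) → TauSeq γ R t1 t2 v

/-- Branching bisimulation on the two-phase semantics. -/
def IsBB {A : Type} (γ : ATD A → ATD A → ATD A)
    (R : Option (Tm A) → Option (Tm A) → Prop) : Prop :=
  ∀ t1 t2, R (some t1) (some t2) →
    (∀ ℓ o1, Step γ t1 ℓ o1 →
      (ℓ = L2.tau ∧ R o1 (some t2)) ∨
      ∃ u o2, TauSeq γ R t1 t2 u ∧ Step γ u ℓ o2 ∧ R o1 o2) ∧
    (∀ ℓ o2, Step γ t2 ℓ o2 →
      (ℓ = L2.tau ∧ R (some t1) o2) ∨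
      ∃ u o1, TauSeq γ (fun p q => R q p) t2 t1 u ∧ Step γ u ℓ o1 ∧ R o1 o2)

/-- Branching bisimilarity ↔_b on the two-phase semantics. -/
def BBisim {A : Type} (γ : ATD A → ATD A → ATD A) (t1 t2 : Tm A) : Prop :=
  ∃ R, IsBB γ R ∧ R (some t1) (some t2)

/-- The root condition of a pair in a relation (two-phase semantics). -/
def RootCond {A : Type} (γ : ATD A → ATD A → ATD A)
    (R : Option (Tm A) → Option (Tm A) → Prop) (t1 t2 : Tm A) : Prop :=
  (∀ ℓ o1, Step γ t1 ℓ o1 → ∃ o2, Step γ t2 ℓ o2 ∧ R o1 o2) ∧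
  (∀ ℓ o2, Step γ t2 ℓ o2 → ∃ o1, Step γ t1 ℓ o1 ∧ R o1 o2)

/-- Reachability by idling only. -/
def Midling {A : Type} : Tm A → Tm A → Prop := Relation.ReflTransGen SStep

/-- Rooted branching bisimilarity ↔_rb on the two-phase semantics. -/
def RootedBB {A : Type} (γ : ATD A → ATD A → ATD A) (t1 t2 : Tm A) : Prop :=
  ∃ R, IsBB γ R ∧ R (some t1) (some t2) ∧
    ∀ t1' t2', Midling t1 t1' → Midling t2 t2' → R (some t1') (some t2') →
      RootCond γ R t1' t2'

/-! ### Time-stamped structural operational semantics -/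

/-- Idling relation of the time-stamped semantics: t ⇑ n. -/
inductive Idles {A : Type} : Tm A → ℕ → Prop where
  | zero (t : Tm A) : Idles t 0
  | altL {t u n} : Idles t n → Idles (.alt t u) n
  | altR {t u n} : Idles u n → Idles (.alt t u) n
  | seq {t n} (u : Tm A) : Idles t n → Idles (.seq t u) n
  | delay {t n} : Idles t n → Idles (.delay t) (n+1)
  | par {t u n} : Idles t n → Idles u n → Idles (.par t u) n
  | lm {t u n} : Idles t n → Idles u n → Idles (.lm t u) n
  | cm {t u n} : Idles t n → Idles u n → Idles (.cm t u) n
  | encap (H : Set A) {t n} : Idles t n → Idles (.encap H t) n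
  | abstr (I : Set A) {t n} : Idles t n → Idles (.abstr I t) n
  | recc {E X n} : Tm.GuardedSpec E → Idles (Tm.sub E (E X)) n → Idles (.recc E X) n
  | shift {t n} : Idles t (n+1) → Idles (.shift t) n

/-- Time-stamped transitions t →^{a[n]} t' (Table 6); the label `none` is τ and
the target `none` is successful termination √. -/
inductive TStep {A : Type} (γ : ATD A → ATD A → ATD A) :
    Tm A → Option A → ℕ → Option (Tm A) → Prop where
  | act (a : A) : TStep γ (.und (.act a)) (some a) 0 none
  | tau : TStep γ (.und .tau) none 0 none
  | altL {t u ℓ n o} : TStep γ t ℓ n o → TStep γ (.alt t u) ℓ n o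
  | altR {t u ℓ n o} : TStep γ u ℓ n o → TStep γ (.alt t u) ℓ n o
  | seqStep {t t' u ℓ n} : TStep γ t ℓ n (some t') →
      TStep γ (.seq t u) ℓ n (some (.seq t' u))
  | seqTerm {t u ℓ n} : TStep γ t ℓ n none → TStep γ (.seq t u) ℓ n (some u)
  | delay {t ℓ n o} : TStep γ t ℓ n o → TStep γ (.delay t) ℓ (n+1) o
  | parL {t t' u ℓ n} : TStep γ t ℓ n (some t') → Idles u n →
      TStep γ (.par t u) ℓ n (some (.par t' (Tm.shiftN n u)))
  | parR {t u u' ℓ n} : Idles t n → TStep γ u ℓ n (some u') →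
      TStep γ (.par t u) ℓ n (some (.par (Tm.shiftN n t) u'))
  | parLT {t u ℓ n} : TStep γ t ℓ n none → Idles u n →
      TStep γ (.par t u) ℓ n (some (Tm.shiftN n u))
  | parRT {t u ℓ n} : Idles t n → TStep γ u ℓ n none →
      TStep γ (.par t u) ℓ n (some (Tm.shiftN n t))
  | parC {t u ℓ₁ ℓ₂ ℓ n o₁ o₂} : TStep γ t ℓ₁ n o₁ → TStep γ u ℓ₂ n o₂ →
      γ (toATD ℓ₁) (toATD ℓ₂) = toATD ℓ → TStep γ (.par t u) ℓ n (parOpt o₁ o₂)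
  | lmStep {t t' u ℓ n} : TStep γ t ℓ n (some t') → Idles u n →
      TStep γ (.lm t u) ℓ n (some (.par t' (Tm.shiftN n u)))
  | lmTerm {t u ℓ n} : TStep γ t ℓ n none → Idles u n →
      TStep γ (.lm t u) ℓ n (some (Tm.shiftN n u))
  | cmC {t u ℓ₁ ℓ₂ ℓ n o₁ o₂} : TStep γ t ℓ₁ n o₁ → TStep γ u ℓ₂ n o₂ →
      γ (toATD ℓ₁) (toATD ℓ₂) = toATD ℓ → TStep γ (.cm t u) ℓ n (parOpt o₁ o₂)
  | encap (H : Set A) {t ℓ n o} : TStep γ t ℓ n o → (∀ b, ℓ = some b → b ∉ H) →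
      TStep γ (.encap H t) ℓ n (Option.map (Tm.encap H) o)
  | abstrKeep (I : Set A) {t ℓ n o} : TStep γ t ℓ n o → (∀ b, ℓ = some b → b ∉ I) →
      TStep γ (.abstr I t) ℓ n (Option.map (Tm.abstr I) o)
  | abstrHide (I : Set A) {t b n o} : TStep γ t (some b) n o → b ∈ I →
      TStep γ (.abstr I t) none n (Option.map (Tm.abstr I) o)
  | timeout {t ℓ o} : TStep γ t ℓ 0 o → TStep γ (.timeout t) ℓ 0 o
  | recc {E X ℓ n o} : Tm.GuardedSpec E → TStep γ (Tm.sub E (E X)) ℓ n o →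
      TStep γ (.recc E X) ℓ n o
  | shift {t ℓ n o} : TStep γ t ℓ (n+1) o → TStep γ (.shift t) ℓ n o

/-- A time-stamped silent path from t₂ with accumulated duration, relating the
appropriately shifted t₁ with every intermediate state. -/
inductive TsSeq {A : Type} (γ : ATD A → ATD A → ATD A)
    (R : Option (Tm A) → Option (Tm A) → Prop) (t1 t2 : Tm A) : ℕ → Tm A → Prop where
  | refl : TsSeq γ R t1 t2 0 t2
  | step {k u nk v} : TsSeq γ R t1 t2 k u → TStep γ u none nk (some v) →
      R (some (Tm.shiftN (k+nk) t1)) (some v) → TsSeq γ R t1 t2 (k+nk) v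

/-- ts-branching bisimulation. -/
def IsTsBB {A : Type} (γ : ATD A → ATD A → ATD A)
    (R : Option (Tm A) → Option (Tm A) → Prop) : Prop :=
  ∀ t1 t2, R (some t1) (some t2) →
    (∀ ℓ n o1, TStep γ t1 ℓ n o1 →
      (ℓ = none ∧ R o1 (some (Tm.shiftN n t2))) ∨
      ∃ k u nm o2, TsSeq γ R t1 t2 k u ∧ TStep γ u ℓ nm o2 ∧ k + nm = n ∧ R o1 o2) ∧
    (∀ ℓ n o2, TStep γ t2 ℓ n o2 →
      (ℓ = none ∧ R (some (Tm.shiftN n t1)) o2) ∨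
      ∃ k u nm o1, TsSeq γ (fun p q => R q p) t2 t1 k u ∧ TStep γ u ℓ nm o1 ∧
        k + nm = n ∧ R o1 o2) ∧
    (∀ n, Idles t1 n ↔ Idles t2 n)

/-- The ts-root condition of a pair in a relation. -/
def TsRootCond {A : Type} (γ : ATD A → ATD A → ATD A)
    (R : Option (Tm A) → Option (Tm A) → Prop) (t1 t2 : Tm A) : Prop :=
  (∀ ℓ n o1, TStep γ t1 ℓ n o1 → ∃ o2, TStep γ t2 ℓ n o2 ∧ R o1 o2) ∧
  (∀ ℓ n o2, TStep γ t2 ℓ n o2 → ∃ o1, TStep γ t1 ℓ n o1 ∧ R o1 o2)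

/-- Rooted ts-branching bisimilarity ↔'_rb. -/
def RootedTsBB {A : Type} (γ : ATD A → ATD A → ATD A) (t1 t2 : Tm A) : Prop :=
  ∃ R, IsTsBB γ R ∧ R (some t1) (some t2) ∧ TsRootCond γ R t1 t2

/-- Activeness: the capability of performing an action in the current time
slice, possibly after some silent steps in the current time slice. -/
inductive Active {A : Type} (γ : ATD A → ATD A → ATD A) : Tm A → Prop where
  | obs {t : Tm A} {a : A} {t' : Tm A} : TStep γ t (some a) 0 (some t') → Active γ t
  | term {t : Tm A} {ℓ : Option A} : TStep γ t ℓ 0 none → Active γ t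
  | tauStep {t t' : Tm A} : TStep γ t none 0 (some t') → Active γ t' → Active γ t

/-- Activeness extended to 𝒫 ∪ {√} (√ is not active). -/
def ActiveO {A : Type} (γ : ATD A → ATD A → ATD A) : Option (Tm A) → Prop
  | some t => Active γ t
  | none => False

/-- A time-stamped silent path for dormancy-aware branching bisimulations:
relatedness of an intermediate state is only required when it is active. -/
inductive DaSeq {A : Type} (γ : ATD A → ATD A → ATD A)
    (R : Option (Tm A) → Option (Tm A) → Prop) (t1 t2 : Tm A) : ℕ → Tm A → Prop where
  | refl : DaSeq γ R t1 t2 0 t2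
  | step {k u nk v} : DaSeq γ R t1 t2 k u → TStep γ u none nk (some v) →
      (Active γ v → R (some (Tm.shiftN (k+nk) t1)) (some v)) → DaSeq γ R t1 t2 (k+nk) v

/-- Dormancy-aware branching bisimulation. -/
def IsDaBB {A : Type} (γ : ATD A → ATD A → ATD A)
    (R : Option (Tm A) → Option (Tm A) → Prop) : Prop :=
  ∀ t1 t2, R (some t1) (some t2) →
    (∀ ℓ n o1, TStep γ t1 ℓ n o1 →
      (ℓ = none ∧ (ActiveO γ o1 → R o1 (some (Tm.shiftN n t2)))) ∨
      ∃ k u nm o2, DaSeq γ R t1 t2 k u ∧ TStep γ u ℓ nm o2 ∧ k + nm = n ∧ R o1 o2) ∧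
    (∀ ℓ n o2, TStep γ t2 ℓ n o2 →
      (ℓ = none ∧ (ActiveO γ o2 → R (some (Tm.shiftN n t1)) o2)) ∨
      ∃ k u nm o1, DaSeq γ (fun p q => R q p) t2 t1 k u ∧ TStep γ u ℓ nm o1 ∧
        k + nm = n ∧ R o1 o2) ∧
    (∀ n, Idles t1 n ↔ Idles t2 n)

/-- Rooted dormancy-aware branching bisimilarity ⇄_rb. -/
def RootedDaBB {A : Type} (γ : ATD A → ATD A → ATD A) (t1 t2 : Tm A) : Prop :=
  ∃ R, IsDaBB γ R ∧ R (some t1) (some t2) ∧ TsRootCond γ R t1 t2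

/-- n-fold σ-step sequences in the two-phase semantics. -/
def SSeq {A : Type} : ℕ → Tm A → Tm A → Prop
  | 0, t, t' => t' = t
  | n+1, t, t' => ∃ u, SStep t u ∧ SSeq n u t'

/-- The axioms of standard concurrency together with the handshaking axiom. -/
inductive SCAx {A : Type} : Tm A → Tm A → Prop where
  | parComm (x y : Tm A) : SCAx (.par x y) (.par y x)
  | parAssoc (x y z : Tm A) : SCAx (.par (.par x y) z) (.par x (.par y z))
  | lmAssoc (x y z : Tm A) : SCAx (.lm (.lm x y) z) (.lm x (.par y z))
  | cmComm (x y : Tm A) : SCAx (.cm x y) (.cm y x)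
  | cmAssoc (x y z : Tm A) : SCAx (.cm (.cm x y) z) (.cm x (.cm y z))
  | cmLm (x y z : Tm A) : SCAx (.cm x (.lm y z)) (.lm (.cm x y) z)
  | handshaking (x y z : Tm A) : SCAx (.timeout (.cm (.cm x y) z)) (.und .delta)

/-- The defining axioms of the time-free projection operator π_tf. -/
inductive TFPAx {A : Type} : Tm A → Tm A → Prop where
  | DRTFP1 (a : ATD A) : TFPAx (.tfp (.und a)) (Tm.dact a)
  | DRTFP2 (x y : Tm A) : TFPAx (.tfp (.alt x y)) (.alt (.tfp x) (.tfp y))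
  | DRTFP3 (x y : Tm A) : TFPAx (.tfp (.seq x y)) (.seq (.tfp x) (.tfp y))
  | DRTFP4 (x : Tm A) : TFPAx (.tfp (.delay x)) (.tfp x)

/-! ### The untimed theory ACP^τ+REC -/

/-- Terms of untimed ACP^τ with guarded recursion. -/
inductive UTm (A : Type) : Type where
  | c : ATD A → UTm A
  | alt : UTm A → UTm A → UTm A
  | seq : UTm A → UTm A → UTm A
  | par : UTm A → UTm A → UTm A
  | lm : UTm A → UTm A → UTm A
  | cm : UTm A → UTm A → UTm A
  | encap : Set A → UTm A → UTm A
  | abstr : Set A → UTm A → UTm A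
  | var : ℕ → UTm A
  | recc : (ℕ → UTm A) → ℕ → UTm A

namespace UTm
variable {A : Type}

def asg (θ : ℕ → UTm A) : UTm A → UTm A
  | c a => c a
  | alt t u => alt (asg θ t) (asg θ u)
  | seq t u => seq (asg θ t) (asg θ u)
  | par t u => par (asg θ t) (asg θ u)
  | lm t u => lm (asg θ t) (asg θ u)
  | cm t u => cm (asg θ t) (asg θ u)
  | encap H t => encap H (asg θ t)
  | abstr I t => abstr I (asg θ t)
  | var X => θ X
  | recc E X => recc E X

def sub (E : ℕ → UTm A) (t : UTm A) : UTm A := asg (fun Y => recc E Y) t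

def Guarded : UTm A → Prop
  | c _ => True
  | alt t u => Guarded t ∧ Guarded u
  | seq t u => Guarded t ∧ (Guarded u ∨ ∃ a : A, t = c (ATD.act a))
  | par t u => Guarded t ∧ Guarded u
  | lm t u => Guarded t ∧ Guarded u
  | cm t u => Guarded t ∧ Guarded u
  | encap _ t => Guarded t
  | abstr _ _ => False
  | var _ => False
  | recc _ _ => True

def GuardedSpec (E : ℕ → UTm A) : Prop := ∀ Y, Guarded (E Y)

/-- Closed untimed term. -/
def Closed : UTm A → Prop
  | c _ => True
  | alt t u => Closed t ∧ Closed u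
  | seq t u => Closed t ∧ Closed u
  | par t u => Closed t ∧ Closed u
  | lm t u => Closed t ∧ Closed u
  | cm t u => Closed t ∧ Closed u
  | encap _ t => Closed t
  | abstr _ t => Closed t
  | var _ => False
  | recc _ _ => True

end UTm

/-- Derivability from the axioms of untimed ACP^τ+REC (with the branching
silent-step axioms B1 and B2 and with RDP and RSP). -/
inductive UDeriv {A : Type} (γ : ATD A → ATD A → ATD A) : UTm A → UTm A → Prop where
  | refl (t) : UDeriv γ t t
  | symm {t u} : UDeriv γ t u → UDeriv γ u t
  | trans {t u v} : UDeriv γ t u → UDeriv γ u v → UDeriv γ t v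
  | altCongr {t t' u u'} : UDeriv γ t t' → UDeriv γ u u' → UDeriv γ (.alt t u) (.alt t' u')
  | seqCongr {t t' u u'} : UDeriv γ t t' → UDeriv γ u u' → UDeriv γ (.seq t u) (.seq t' u')
  | parCongr {t t' u u'} : UDeriv γ t t' → UDeriv γ u u' → UDeriv γ (.par t u) (.par t' u')
  | lmCongr {t t' u u'} : UDeriv γ t t' → UDeriv γ u u' → UDeriv γ (.lm t u) (.lm t' u')
  | cmCongr {t t' u u'} : UDeriv γ t t' → UDeriv γ u u' → UDeriv γ (.cm t u) (.cm t' u')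
  | encapCongr (H) {t t'} : UDeriv γ t t' → UDeriv γ (.encap H t) (.encap H t')
  | abstrCongr (I) {t t'} : UDeriv γ t t' → UDeriv γ (.abstr I t) (.abstr I t')
  | A1 (x y) : UDeriv γ (.alt x y) (.alt y x)
  | A2 (x y z) : UDeriv γ (.alt (.alt x y) z) (.alt x (.alt y z))
  | A3 (x) : UDeriv γ (.alt x x) x
  | A4 (x y z) : UDeriv γ (.seq (.alt x y) z) (.alt (.seq x z) (.seq y z))
  | A5 (x y z) : UDeriv γ (.seq (.seq x y) z) (.seq x (.seq y z))
  | A6 (x) : UDeriv γ (.alt x (.c .delta)) x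
  | A7 (x) : UDeriv γ (.seq (.c .delta) x) (.c .delta)
  | D1 (a : ATD A) (H : Set A) (h : ∀ b, a = ATD.act b → b ∉ H) :
      UDeriv γ (.encap H (.c a)) (.c a)
  | D2 (b : A) (H : Set A) (h : b ∈ H) : UDeriv γ (.encap H (.c (.act b))) (.c .delta)
  | D3 (H x y) : UDeriv γ (.encap H (.alt x y)) (.alt (.encap H x) (.encap H y))
  | D4 (H x y) : UDeriv γ (.encap H (.seq x y)) (.seq (.encap H x) (.encap H y))
  | TI1 (a : ATD A) (I : Set A) (h : ∀ b, a = ATD.act b → b ∉ I) :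
      UDeriv γ (.abstr I (.c a)) (.c a)
  | TI2 (b : A) (I : Set A) (h : b ∈ I) : UDeriv γ (.abstr I (.c (.act b))) (.c .tau)
  | TI3 (I x y) : UDeriv γ (.abstr I (.alt x y)) (.alt (.abstr I x) (.abstr I y))
  | TI4 (I x y) : UDeriv γ (.abstr I (.seq x y)) (.seq (.abstr I x) (.abstr I y))
  | CM1 (x y) : UDeriv γ (.par x y) (.alt (.alt (.lm x y) (.lm y x)) (.cm x y))
  | CM2 (a : ATD A) (x) : UDeriv γ (.lm (.c a) x) (.seq (.c a) x)
  | CM3 (a : ATD A) (x y) : UDeriv γ (.lm (.seq (.c a) x) y) (.seq (.c a) (.par x y))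
  | CM4 (x y z) : UDeriv γ (.lm (.alt x y) z) (.alt (.lm x z) (.lm y z))
  | CM5 (a b : ATD A) (x) : UDeriv γ (.cm (.seq (.c a) x) (.c b)) (.seq (.cm (.c a) (.c b)) x)
  | CM6 (a b : ATD A) (x) : UDeriv γ (.cm (.c a) (.seq (.c b) x)) (.seq (.cm (.c a) (.c b)) x)
  | CM7 (a b : ATD A) (x y) :
      UDeriv γ (.cm (.seq (.c a) x) (.seq (.c b) y)) (.seq (.cm (.c a) (.c b)) (.par x y))
  | CM8 (x y z) : UDeriv γ (.cm (.alt x y) z) (.alt (.cm x z) (.cm y z))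
  | CM9 (x y z) : UDeriv γ (.cm x (.alt y z)) (.alt (.cm x y) (.cm x z))
  | CF (a b : ATD A) : UDeriv γ (.cm (.c a) (.c b)) (.c (γ a b))
  | B1 (x) : UDeriv γ (.seq x (.c .tau)) x
  | B2 (x y z) : UDeriv γ (.seq x (.alt (.seq (.c .tau) (.alt y z)) z)) (.seq x (.alt y z))
  | RDP (E : ℕ → UTm A) (X : ℕ) (hg : UTm.GuardedSpec E) :
      UDeriv γ (.recc E X) (UTm.sub E (E X))
  | RSP (E : ℕ → UTm A) (θ : ℕ → UTm A) (X : ℕ) (hg : UTm.GuardedSpec E)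
      (h : ∀ Y, UDeriv γ (θ Y) (UTm.asg θ (E Y))) : UDeriv γ (θ X) (.recc E X)

/-- The embedding ε of untimed ACP^τ+REC terms into ACP_drt^τ+REC, replacing
each action constant a by the delayable action ⟨X | X = \underline{a} + σ(X)⟩. -/
def eps {A : Type} : UTm A → Tm A
  | .c a => Tm.dact a
  | .alt t u => .alt (eps t) (eps u)
  | .seq t u => .seq (eps t) (eps u)
  | .par t u => .par (eps t) (eps u)
  | .lm t u => .lm (eps t) (eps u)
  | .cm t u => .cm (eps t) (eps u)
  | .encap H t => .encap H (eps t)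
  | .abstr I t => .abstr I (eps t)
  | .var X => .var X
  | .recc E X => .recc (fun Y => eps (E Y)) X

/-! ### Auxiliary development for the expansion theorem -/

namespace Expn
open Tm

variable {A : Type} {γ : ATD A → ATD A → ATD A}

/-- Abbreviation for derivability from ACP_drt^τ plus SC + handshaking axioms. -/
abbrev Dv (γ : ATD A → ATD A → ATD A) (t u : Tm A) : Prop := Deriv γ SCAx false t u

instance : Trans (Dv γ) (Dv γ) (Dv γ) := ⟨Deriv.trans⟩

lemma dAC3 {x y z : Tm A} :
    Dv γ (.alt (.alt x y) z) (.alt x (.alt y z)) := Deriv.A2 x y z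

lemma dcomm {x y : Tm A} : Dv γ (.alt x y) (.alt y x) := Deriv.A1 x y

lemma daddDelta {x : Tm A} : Dv γ (.alt x (.und .delta)) x := Deriv.A6DR x

lemma ddeltaAdd {x : Tm A} : Dv γ (.alt (.und .delta) x) x :=
  (dcomm).trans daddDelta

/-- Summand inclusion: u is absorbed by v. -/
def Sb (γ : ATD A → ATD A → ATD A) (u v : Tm A) : Prop := Dv γ (.alt v u) v

lemma sb_of_d {u v : Tm A} (h : Dv γ u v) : Sb γ u v :=
  (Deriv.altCongr (Deriv.refl v) h).trans (Deriv.A3 v)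

lemma sb_refl {u : Tm A} : Sb γ u u := Deriv.A3 u

lemma sb_delta {v : Tm A} : Sb γ (.und .delta) v := daddDelta

lemma sb_congr {u u' v v' : Tm A} (hu : Dv γ u u') (hv : Dv γ v v')
    (h : Sb γ u v) : Sb γ u' v' :=
  ((Deriv.altCongr hv.symm hu.symm).trans h).trans hv

lemma sb_trans {u v w : Tm A} (h1 : Sb γ u v) (h2 : Sb γ v w) : Sb γ u w := by
  -- w + u = (w + v) + u = w + (v + u) = w + v = w
  have : Dv γ (.alt w u) (.alt (.alt w v) u) := Deriv.altCongr h2.symm (Deriv.refl u)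
  exact this.trans (dAC3.trans ((Deriv.altCongr (Deriv.refl w) h1).trans h2))

lemma sb_alt {u1 u2 v : Tm A} (h1 : Sb γ u1 v) (h2 : Sb γ u2 v) :
    Sb γ (.alt u1 u2) v :=
  (dAC3.symm.trans (Deriv.altCongr h1 (Deriv.refl u2))).trans h2

lemma sb_inl {u v1 v2 : Tm A} (h : Sb γ u v1) : Sb γ u (.alt v1 v2) := by
  -- (v1+v2)+u = (v2+v1)+u = v2+(v1+u) = v2+v1 = v1+v2
  have : Dv γ (.alt (.alt v1 v2) u) (.alt v2 (.alt v1 u)) :=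
    (Deriv.altCongr dcomm (Deriv.refl u)).trans dAC3
  exact (this.trans ((Deriv.altCongr (Deriv.refl v2) h).trans dcomm))

lemma sb_inr {u v1 v2 : Tm A} (h : Sb γ u v2) : Sb γ u (.alt v1 v2) :=
  (dAC3.trans (Deriv.altCongr (Deriv.refl v1) h))

lemma d_of_sb_sb {u v : Tm A} (h1 : Sb γ u v) (h2 : Sb γ v u) : Dv γ u v :=
  h2.symm.trans (dcomm.trans h1)

lemma sb_alt_mono {u1 u2 v1 v2 : Tm A} (h1 : Sb γ u1 v1) (h2 : Sb γ u2 v2) :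
    Sb γ (.alt u1 u2) (.alt v1 v2) :=
  sb_alt (sb_inl h1) (sb_inr h2)

/-- distributing sums out of a left merge's left argument -/
lemma sb_lm_mono {u v w : Tm A} (h : Sb γ u v) : Sb γ (.lm u w) (.lm v w) :=
  sb_congr (Deriv.refl _) (Deriv.refl _) <|
    ((Deriv.CM4 v u w).symm.trans (Deriv.lmCongr h (Deriv.refl w)))

lemma sb_cm_monoL {u v w : Tm A} (h : Sb γ u v) : Sb γ (.cm u w) (.cm v w) :=
  ((Deriv.CM8 v u w).symm.trans (Deriv.cmCongr h (Deriv.refl w)))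

lemma sb_cm_monoR {u v w : Tm A} (h : Sb γ u v) : Sb γ (.cm w u) (.cm w v) :=
  ((Deriv.CM9 w v u).symm.trans (Deriv.cmCongr (Deriv.refl w) h))

lemma sb_delay_mono {u v : Tm A} (h : Sb γ u v) : Sb γ (.delay u) (.delay v) :=
  ((Deriv.DRT1 v u).trans (Deriv.delayCongr h))

lemma altList_cons {t : Tm A} {ts : List (Tm A)} :
    Dv γ (altList (t :: ts)) (.alt t (altList ts)) := by
  cases ts with
  | nil => exact daddDelta.symm
  | cons u us => exact Deriv.refl _

lemma altList_append {L M : List (Tm A)} :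
    Dv γ (altList (L ++ M)) (.alt (altList L) (altList M)) := by
  induction L with
  | nil => exact ddeltaAdd.symm
  | cons t ts ih =>
      exact altList_cons.trans ((Deriv.altCongr (Deriv.refl t) ih).trans
        (dAC3.symm.trans (Deriv.altCongr altList_cons.symm (Deriv.refl _))))

lemma sb_altList {L : List (Tm A)} {v : Tm A} (h : ∀ t ∈ L, Sb γ t v) :
    Sb γ (altList L) v := by
  induction L with
  | nil => exact sb_delta
  | cons t ts ih =>
      exact sb_congr altList_cons.symm (Deriv.refl v)
        (sb_alt (h t (by simp)) (ih fun u hu => h u (by simp [hu])))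

lemma sb_of_mem_altList {L : List (Tm A)} {t : Tm A} (h : t ∈ L) :
    Sb γ t (altList L) := by
  induction L with
  | nil => simp at h
  | cons u us ih =>
      rcases List.mem_cons.mp h with rfl | h'
      · exact sb_congr (Deriv.refl t) altList_cons.symm (sb_inl sb_refl)
      · exact sb_congr (Deriv.refl t) altList_cons.symm (sb_inr (ih h'))

lemma altList_map_congr {ι : Type} {l : List ι} {f g : ι → Tm A}
    (h : ∀ i ∈ l, Dv γ (f i) (g i)) :
    Dv γ (altList (l.map f)) (altList (l.map g)) := by
  induction l with
  | nil => exact Deriv.refl _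
  | cons i is ih =>
      exact altList_cons.trans ((Deriv.altCongr (h i (by simp))
        (ih fun j hj => h j (by simp [hj]))).trans altList_cons.symm)

/-- Size of a term (not recursing into recursive specifications). -/
def sz : Tm A → ℕ
  | .und _ => 1
  | .alt t u => sz t + sz u + 1
  | .seq t u => sz t + sz u + 1
  | .delay t => sz t + 1
  | .par t u => sz t + sz u + 1
  | .lm t u => sz t + sz u + 1
  | .cm t u => sz t + sz u + 1
  | .encap _ t => sz t + 1
  | .abstr _ t => sz t + 1
  | .timeout t => sz t + 1
  | .var _ => 1
  | .recc _ _ => 1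
  | .shift t => sz t + 1
  | .tfp t => sz t + 1

/-- The joint body of the σ-summands of a (basic) term, if any. -/
def sbod : Tm A → Option (Tm A)
  | .delay t => some t
  | .alt t u => match sbod t, sbod u with
      | some a, some b => some (.alt a b)
      | some a, none => some a
      | none, some b => some b
      | none, none => none
  | _ => none

lemma sbod_basic {b : Tm A} (hb : Basic b) :
    ∀ q, sbod b = some q → Basic q ∧ sz q < sz b := by
  induction hb with
  | und a => intro q h; simp [sbod] at h
  | pre a h t ih => intro q h; simp [sbod] at h
  | @delay t ht ih =>
      intro q h
      simp only [sbod] at h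
      cases h
      exact ⟨ht, by simp [sz]⟩
  | @alt t u ht hu iht ihu =>
      intro q h
      rcases h1 : sbod t with _ | q1 <;> rcases h2 : sbod u with _ | q2 <;>
        simp only [sbod, h1, h2] at h
      · exact absurd h (by simp)
      · obtain rfl : q2 = q := by injection h
        exact ⟨(ihu q2 h2).1, by have := (ihu q2 h2).2; simp [sz]; omega⟩
      · obtain rfl : q1 = q := by injection h
        exact ⟨(iht q1 h1).1, by have := (iht q1 h1).2; simp [sz]; omega⟩
      · obtain rfl : Tm.alt q1 q2 = q := by injection h
        refine ⟨Basic.alt (iht q1 h1).1 (ihu q2 h2).1, ?_⟩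
        have := (iht q1 h1).2; have := (ihu q2 h2).2; simp [sz]; omega

lemma nu_und {a : ATD A} : Dv γ (.und a) (.timeout (.und a)) := (Deriv.DRTO1 a).symm

lemma nu_pre {a : ATD A} {t : Tm A} :
    Dv γ (.seq (.und a) t) (.timeout (.seq (.und a) t)) :=
  ((Deriv.DRTO3 (.und a) t).trans
    (Deriv.seqCongr (Deriv.DRTO1 a) (Deriv.refl t))).symm

lemma dadd4 {a b c d : Tm A} :
    Dv γ (.alt (.alt a b) (.alt c d)) (.alt (.alt a c) (.alt b d)) := by
  apply d_of_sb_sb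
  · exact sb_alt (sb_alt_mono (sb_inl sb_refl) (sb_inl sb_refl))
      (sb_alt_mono (sb_inr sb_refl) (sb_inr sb_refl))
  · exact sb_alt (sb_alt_mono (sb_inl sb_refl) (sb_inl sb_refl))
      (sb_alt_mono (sb_inr sb_refl) (sb_inr sb_refl))

/-- Decomposition of a basic term into ν-part and σ-part. -/
lemma split_basic {b : Tm A} (hb : Basic b) :
    (sbod b = none → ∃ p, Dv γ b (.timeout p)) ∧
    (∀ q, sbod b = some q → ∃ p, Dv γ b (.alt (.timeout p) (.delay q))) := by
  induction hb with
  | und a => exact ⟨fun _ => ⟨.und a, nu_und⟩, fun q h => by simp [sbod] at h⟩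
  | pre a h t ih =>
      exact ⟨fun _ => ⟨_, nu_pre⟩, fun q h => by simp [sbod] at h⟩
  | @delay t ht ih =>
      refine ⟨fun h => by simp [sbod] at h, fun q h => ?_⟩
      simp only [sbod] at h; cases h
      exact ⟨.und .delta,
        ((Deriv.altCongr (Deriv.DRTO1 (A := A) .delta) (Deriv.refl _)).trans
          ddeltaAdd).symm⟩
  | @alt t u ht hu iht ihu =>
      constructor
      · intro h
        rcases h1 : sbod t with _ | q1 <;> rcases h2 : sbod u with _ | q2 <;>
          simp only [sbod, h1, h2] at h
        · obtain ⟨p1, hp1⟩ := iht.1 h1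
          obtain ⟨p2, hp2⟩ := ihu.1 h2
          exact ⟨.alt p1 p2,
            (Deriv.altCongr hp1 hp2).trans (Deriv.DRTO2 p1 p2).symm⟩
        all_goals exact absurd h (by simp)
      · intro q h
        rcases h1 : sbod t with _ | q1 <;> rcases h2 : sbod u with _ | q2 <;>
          simp only [sbod, h1, h2] at h
        · exact absurd h (by simp)
        · obtain rfl : q2 = q := by injection h
          obtain ⟨p1, hp1⟩ := iht.1 h1
          obtain ⟨p2, hp2⟩ := ihu.2 q2 h2
          -- νp1 + (νp2 + σq2) = (νp1+νp2) + σq2 = ν(p1+p2) + σq2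
          exact ⟨.alt p1 p2, (Deriv.altCongr hp1 hp2).trans (dAC3.symm.trans
            (Deriv.altCongr (Deriv.DRTO2 p1 p2).symm (Deriv.refl _)))⟩
        · obtain rfl : q1 = q := by injection h
          obtain ⟨p1, hp1⟩ := iht.2 q1 h1
          obtain ⟨p2, hp2⟩ := ihu.1 h2
          -- (νp1 + σq1) + νp2 = (νp1+νp2) + σq1
          refine ⟨.alt p1 p2, (Deriv.altCongr hp1 hp2).trans ?_⟩
          exact dAC3.trans ((Deriv.altCongr (Deriv.refl _) dcomm).trans
            (dAC3.symm.trans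
              (Deriv.altCongr (Deriv.DRTO2 p1 p2).symm (Deriv.refl _))))
        · obtain rfl : Tm.alt q1 q2 = q := by injection h
          obtain ⟨p1, hp1⟩ := iht.2 q1 h1
          obtain ⟨p2, hp2⟩ := ihu.2 q2 h2
          exact ⟨.alt p1 p2, (Deriv.altCongr hp1 hp2).trans (dadd4.trans
            (Deriv.altCongr (Deriv.DRTO2 p1 p2).symm (Deriv.DRT1 q1 q2)))⟩

lemma split_nu {b : Tm A} (hb : Basic b) (h : sbod b = none) :
    ∃ p, Dv γ b (.timeout p) := (split_basic hb).1 h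

lemma split_sig {b : Tm A} (hb : Basic b) {q : Tm A} (h : sbod b = some q) :
    ∃ p, Dv γ b (.alt (.timeout p) (.delay q)) := (split_basic hb).2 q h

/-- Communication with a term all of whose actions communicate to δ. -/
lemma dead_cm {g : ATD A} (hg : ∀ h, γ g h = ATD.delta) {d : Tm A} (hd : Basic d) :
    Dv γ (.cm (.und g) d) (.und .delta) ∧
    ∀ w, Dv γ (.cm (.seq (.und g) w) d) (.und .delta) := by
  induction hd with
  | und a =>
      have hga : Dv γ (.und (γ g a)) (.und .delta) := by
        rw [hg a]; exact Deriv.refl _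
      constructor
      · exact (Deriv.CFDR g a).trans hga
      · intro w
        exact (Deriv.CM5DR g a w).trans ((Deriv.seqCongr
          ((Deriv.CFDR g a).trans hga)
          (Deriv.refl w)).trans (Deriv.A7DR w))
  | @pre a h t ht ih =>
      have hga : Dv γ (.und (γ g a)) (.und .delta) := by
        rw [hg a]; exact Deriv.refl _
      constructor
      · exact (Deriv.CM6DR g a t).trans ((Deriv.seqCongr
          ((Deriv.CFDR g a).trans hga)
          (Deriv.refl t)).trans (Deriv.A7DR t))
      · intro w
        exact (Deriv.CM7DR g a w t).trans ((Deriv.seqCongr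
          ((Deriv.CFDR g a).trans hga)
          (Deriv.refl _)).trans (Deriv.A7DR _))
  | @delay t ht ih =>
      constructor
      · exact (Deriv.cmCongr nu_und (Deriv.refl _)).trans (Deriv.DRCM3 _ t)
      · intro w
        exact (Deriv.cmCongr nu_pre (Deriv.refl _)).trans (Deriv.DRCM3 _ t)
  | @alt t u ht hu iht ihu =>
      constructor
      · exact (Deriv.CM9 _ t u).trans ((Deriv.altCongr iht.1 ihu.1).trans daddDelta)
      · intro w
        exact (Deriv.CM9 _ t u).trans
          ((Deriv.altCongr (iht.2 w) (ihu.2 w)).trans daddDelta)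

/-- Communication of a σ-term with a basic term. -/
lemma cm_delay {d : Tm A} (hd : Basic d) (w : Tm A) :
    (sbod d = none → Dv γ (.cm (.delay w) d) (.und .delta)) ∧
    (∀ q, sbod d = some q → Dv γ (.cm (.delay w) d) (.delay (.cm w q))) := by
  induction hd with
  | und a =>
      refine ⟨fun _ => ?_, fun q h => by simp [sbod] at h⟩
      exact (Deriv.cmCongr (Deriv.refl _) nu_und).trans (Deriv.DRCM4 w _)
  | pre a h t ih =>
      refine ⟨fun _ => ?_, fun q h => by simp [sbod] at h⟩
      exact (Deriv.cmCongr (Deriv.refl _) nu_pre).trans (Deriv.DRCM4 w _)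
  | @delay t ht ih =>
      refine ⟨fun h => by simp [sbod] at h, fun q h => ?_⟩
      simp only [sbod] at h; cases h
      exact Deriv.DRCM5 w t
  | @alt t u ht hu iht ihu =>
      constructor
      · intro h
        rcases h1 : sbod t with _ | q1 <;> rcases h2 : sbod u with _ | q2 <;>
          simp only [sbod, h1, h2] at h
        · exact (Deriv.CM9 _ t u).trans
            ((Deriv.altCongr (iht.1 h1) (ihu.1 h2)).trans daddDelta)
        all_goals exact absurd h (by simp)
      · intro q h
        rcases h1 : sbod t with _ | q1 <;> rcases h2 : sbod u with _ | q2 <;>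
          simp only [sbod, h1, h2] at h
        · exact absurd h (by simp)
        · obtain rfl : q2 = q := by injection h
          exact (Deriv.CM9 _ t u).trans ((Deriv.altCongr (iht.1 h1) (ihu.2 q2 h2)).trans
            ddeltaAdd)
        · obtain rfl : q1 = q := by injection h
          exact (Deriv.CM9 _ t u).trans ((Deriv.altCongr (iht.2 q1 h1) (ihu.1 h2)).trans
            daddDelta)
        · obtain rfl : Tm.alt q1 q2 = q := by injection h
          exact (Deriv.CM9 _ t u).trans ((Deriv.altCongr (iht.2 q1 h1) (ihu.2 q2 h2)).trans
            ((Deriv.DRT1 _ _).trans (Deriv.delayCongr (Deriv.CM9 w q1 q2).symm)))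

/-- Communication of an action atom with a basic term is a ν-form. -/
lemma cm_atom_nu {e : Tm A} (he : Basic e) :
    (∀ a : ATD A, ∃ p, Dv γ (.cm (.und a) e) (.timeout p)) ∧
    (∀ (a : ATD A) (t : Tm A), ∃ p, Dv γ (.cm (.seq (.und a) t) e) (.timeout p)) := by
  induction he with
  | und b =>
      constructor
      · intro a
        exact ⟨.und (γ a b), (Deriv.CFDR a b).trans nu_und⟩
      · intro a t
        exact ⟨_, (Deriv.CM5DR a b t).trans
          ((Deriv.seqCongr (Deriv.CFDR a b) (Deriv.refl t)).trans nu_pre)⟩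
  | @pre b h u hu ih =>
      constructor
      · intro a
        exact ⟨_, (Deriv.CM6DR a b _).trans
          ((Deriv.seqCongr (Deriv.CFDR a b) (Deriv.refl _)).trans nu_pre)⟩
      · intro a t
        exact ⟨_, (Deriv.CM7DR a b t _).trans
          ((Deriv.seqCongr (Deriv.CFDR a b) (Deriv.refl _)).trans nu_pre)⟩
  | @delay u hu ih =>
      constructor
      · intro a
        exact ⟨.und .delta, ((Deriv.cmCongr nu_und (Deriv.refl _)).trans
          (Deriv.DRCM3 _ u)).trans nu_und⟩
      · intro a t
        exact ⟨.und .delta, ((Deriv.cmCongr nu_pre (Deriv.refl _)).trans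
          (Deriv.DRCM3 _ u)).trans nu_und⟩
  | @alt t u ht hu iht ihu =>
      constructor
      · intro a
        obtain ⟨p1, hp1⟩ := iht.1 a
        obtain ⟨p2, hp2⟩ := ihu.1 a
        exact ⟨.alt p1 p2, (Deriv.CM9 _ t u).trans
          ((Deriv.altCongr hp1 hp2).trans (Deriv.DRTO2 p1 p2).symm)⟩
      · intro a w
        obtain ⟨p1, hp1⟩ := iht.2 a w
        obtain ⟨p2, hp2⟩ := ihu.2 a w
        exact ⟨.alt p1 p2, (Deriv.CM9 _ t u).trans
          ((Deriv.altCongr hp1 hp2).trans (Deriv.DRTO2 p1 p2).symm)⟩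

lemma sig_pad {u : Tm A} :
    Dv γ (.delay u) (.alt (.timeout (.und .delta)) (.delay u)) :=
  ((Deriv.altCongr (Deriv.DRTO1 (A := A) .delta) (Deriv.refl _)).trans ddeltaAdd).symm

lemma sbod_alt_none {t u : Tm A} (h : sbod (.alt t u) = none) :
    sbod t = none ∧ sbod u = none := by
  rcases h1 : sbod t with _ | q1 <;> rcases h2 : sbod u with _ | q2 <;>
    simp only [sbod, h1, h2] at h <;> simp_all

/-- ν/σ decomposition of a communication merge of basic terms. -/
lemma cm_split {d e : Tm A} (hd : Basic d) (he : Basic e) :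
    ((sbod d = none ∨ sbod e = none) → ∃ p, Dv γ (.cm d e) (.timeout p)) ∧
    (∀ qd qe, sbod d = some qd → sbod e = some qe →
      ∃ p, Dv γ (.cm d e) (.alt (.timeout p) (.delay (.cm qd qe)))) := by
  induction hd with
  | und a =>
      exact ⟨fun _ => (cm_atom_nu he).1 a, fun qd qe h _ => by simp [sbod] at h⟩
  | @pre a ha t ht ih =>
      exact ⟨fun _ => (cm_atom_nu he).2 a t, fun qd qe h _ => by simp [sbod] at h⟩
  | @delay t ht ih =>
      constructor
      · rintro (h | h)
        · simp [sbod] at h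
        · exact ⟨.und .delta, ((cm_delay he t).1 h).trans nu_und⟩
      · intro qd qe h he2
        obtain rfl : t = qd := by simpa [sbod] using h
        exact ⟨.und .delta, ((cm_delay he t).2 qe he2).trans sig_pad⟩
  | @alt t u ht hu iht ihu =>
      constructor
      · intro h
        have h' : (sbod t = none ∨ sbod e = none) ∧ (sbod u = none ∨ sbod e = none) := by
          rcases h with h | h
          · obtain ⟨h1, h2⟩ := sbod_alt_none h
            exact ⟨Or.inl h1, Or.inl h2⟩
          · exact ⟨Or.inr h, Or.inr h⟩
        obtain ⟨p1, hp1⟩ := iht.1 h'.1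
        obtain ⟨p2, hp2⟩ := ihu.1 h'.2
        exact ⟨.alt p1 p2, (Deriv.CM8 t u e).trans
          ((Deriv.altCongr hp1 hp2).trans (Deriv.DRTO2 p1 p2).symm)⟩
      · intro qd qe h he2
        rcases h1 : sbod t with _ | q1 <;> rcases h2 : sbod u with _ | q2 <;>
          simp only [sbod, h1, h2] at h
        · exact absurd h (by simp)
        · obtain rfl : q2 = qd := by injection h
          obtain ⟨p1, hp1⟩ := iht.1 (Or.inl h1)
          obtain ⟨p2, hp2⟩ := ihu.2 q2 qe h2 he2
          exact ⟨.alt p1 p2, (Deriv.CM8 t u e).trans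
            ((Deriv.altCongr hp1 hp2).trans (dAC3.symm.trans
              (Deriv.altCongr (Deriv.DRTO2 p1 p2).symm (Deriv.refl _))))⟩
        · obtain rfl : q1 = qd := by injection h
          obtain ⟨p1, hp1⟩ := iht.2 q1 qe h1 he2
          obtain ⟨p2, hp2⟩ := ihu.1 (Or.inl h2)
          refine ⟨.alt p1 p2, (Deriv.CM8 t u e).trans
            ((Deriv.altCongr hp1 hp2).trans ?_)⟩
          exact dAC3.trans ((Deriv.altCongr (Deriv.refl _) dcomm).trans
            (dAC3.symm.trans
              (Deriv.altCongr (Deriv.DRTO2 p1 p2).symm (Deriv.refl _))))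
        · obtain rfl : Tm.alt q1 q2 = qd := by injection h
          obtain ⟨p1, hp1⟩ := iht.2 q1 qe h1 he2
          obtain ⟨p2, hp2⟩ := ihu.2 q2 qe h2 he2
          exact ⟨.alt p1 p2, (Deriv.CM8 t u e).trans
            ((Deriv.altCongr hp1 hp2).trans (dadd4.trans
              (Deriv.altCongr (Deriv.DRTO2 p1 p2).symm
                ((Deriv.DRT1 _ _).trans
                  (Deriv.delayCongr (Deriv.CM8 q1 q2 qe).symm)))))⟩

/-- ν/σ decomposition of a left merge of basic terms. -/
lemma lm_split {d e : Tm A} (hd : Basic d) (he : Basic e) :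
    ((sbod d = none ∨ sbod e = none) → ∃ p, Dv γ (.lm d e) (.timeout p)) ∧
    (∀ qd qe, sbod d = some qd → sbod e = some qe →
      ∃ p, Dv γ (.lm d e) (.alt (.timeout p) (.delay (.lm qd qe)))) := by
  induction hd with
  | und a =>
      exact ⟨fun _ => ⟨_, (Deriv.CM2DR a e).trans nu_pre⟩,
        fun qd qe h _ => by simp [sbod] at h⟩
  | @pre a ha t ht ih =>
      exact ⟨fun _ => ⟨_, (Deriv.CM3DR a t e).trans nu_pre⟩,
        fun qd qe h _ => by simp [sbod] at h⟩
  | @delay t ht ih =>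
      constructor
      · rintro (h | h)
        · simp [sbod] at h
        · obtain ⟨p, hp⟩ := split_nu he h
          exact ⟨.und .delta, ((Deriv.lmCongr (Deriv.refl _) hp).trans
            (Deriv.DRCM1 t p)).trans nu_und⟩
      · intro qd qe h he2
        obtain rfl : t = qd := by simpa [sbod] using h
        obtain ⟨p, hp⟩ := split_sig he he2
        exact ⟨.und .delta, ((Deriv.lmCongr (Deriv.refl _) hp).trans
          (Deriv.DRCM2 t p qe)).trans sig_pad⟩
  | @alt t u ht hu iht ihu =>
      constructor
      · intro h
        have h' : (sbod t = none ∨ sbod e = none) ∧ (sbod u = none ∨ sbod e = none) := by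
          rcases h with h | h
          · obtain ⟨h1, h2⟩ := sbod_alt_none h
            exact ⟨Or.inl h1, Or.inl h2⟩
          · exact ⟨Or.inr h, Or.inr h⟩
        obtain ⟨p1, hp1⟩ := iht.1 h'.1
        obtain ⟨p2, hp2⟩ := ihu.1 h'.2
        exact ⟨.alt p1 p2, (Deriv.CM4 t u e).trans
          ((Deriv.altCongr hp1 hp2).trans (Deriv.DRTO2 p1 p2).symm)⟩
      · intro qd qe h he2
        rcases h1 : sbod t with _ | q1 <;> rcases h2 : sbod u with _ | q2 <;>
          simp only [sbod, h1, h2] at h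
        · exact absurd h (by simp)
        · obtain rfl : q2 = qd := by injection h
          obtain ⟨p1, hp1⟩ := iht.1 (Or.inl h1)
          obtain ⟨p2, hp2⟩ := ihu.2 q2 qe h2 he2
          exact ⟨.alt p1 p2, (Deriv.CM4 t u e).trans
            ((Deriv.altCongr hp1 hp2).trans (dAC3.symm.trans
              (Deriv.altCongr (Deriv.DRTO2 p1 p2).symm (Deriv.refl _))))⟩
        · obtain rfl : q1 = qd := by injection h
          obtain ⟨p1, hp1⟩ := iht.2 q1 qe h1 he2
          obtain ⟨p2, hp2⟩ := ihu.1 (Or.inl h2)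
          refine ⟨.alt p1 p2, (Deriv.CM4 t u e).trans
            ((Deriv.altCongr hp1 hp2).trans ?_)⟩
          exact dAC3.trans ((Deriv.altCongr (Deriv.refl _) dcomm).trans
            (dAC3.symm.trans
              (Deriv.altCongr (Deriv.DRTO2 p1 p2).symm (Deriv.refl _))))
        · obtain rfl : Tm.alt q1 q2 = qd := by injection h
          obtain ⟨p1, hp1⟩ := iht.2 q1 qe h1 he2
          obtain ⟨p2, hp2⟩ := ihu.2 q2 qe h2 he2
          exact ⟨.alt p1 p2, (Deriv.CM4 t u e).trans
            ((Deriv.altCongr hp1 hp2).trans (dadd4.trans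
              (Deriv.altCongr (Deriv.DRTO2 p1 p2).symm
                ((Deriv.DRT1 _ _).trans
                  (Deriv.delayCongr (Deriv.CM4 q1 q2 qe).symm)))))⟩

/-- ν/σ decomposition of a parallel composition of basic terms. -/
lemma par_split {d e : Tm A} (hd : Basic d) (he : Basic e) :
    ((sbod d = none ∨ sbod e = none) → ∃ p, Dv γ (.par d e) (.timeout p)) ∧
    (∀ qd qe, sbod d = some qd → sbod e = some qe →
      ∃ p, Dv γ (.par d e) (.alt (.timeout p) (.delay (.par qd qe)))) := by
  constructor
  · intro h
    obtain ⟨p1, hp1⟩ := (lm_split hd he).1 h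
    obtain ⟨p2, hp2⟩ := (lm_split he hd).1 h.symm
    obtain ⟨p3, hp3⟩ := (cm_split hd he).1 h
    exact ⟨.alt (.alt p1 p2) p3, (Deriv.CM1 d e).trans
      ((Deriv.altCongr (Deriv.altCongr hp1 hp2) hp3).trans
        ((Deriv.altCongr (Deriv.DRTO2 p1 p2).symm (Deriv.refl _)).trans
          (Deriv.DRTO2 _ p3).symm))⟩
  · intro qd qe h1 h2
    obtain ⟨p1, hp1⟩ := (lm_split hd he).2 qd qe h1 h2
    obtain ⟨p2, hp2⟩ := (lm_split he hd).2 qe qd h2 h1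
    obtain ⟨p3, hp3⟩ := (cm_split hd he).2 qd qe h1 h2
    refine ⟨.alt (.alt p1 p2) p3, (Deriv.CM1 d e).trans
      ((Deriv.altCongr (Deriv.altCongr hp1 hp2) hp3).trans ?_)⟩
    -- ((νp1+σA)+(νp2+σB)) + (νp3+σC) = ν((p1+p2)+p3) + σ((A+B)+C) = ... + σ(qd∥qe)
    exact (Deriv.altCongr dadd4 (Deriv.refl _)).trans (dadd4.trans
      (Deriv.altCongr
        ((Deriv.altCongr (Deriv.DRTO2 p1 p2).symm (Deriv.refl _)).trans
          (Deriv.DRTO2 _ p3).symm)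
        ((Deriv.altCongr (Deriv.DRT1 _ _) (Deriv.refl _)).trans
          ((Deriv.DRT1 _ _).trans
            (Deriv.delayCongr (Deriv.CM1 qd qe).symm)))))

section Gamma

variable (hγcomm : ∀ a b : ATD A, γ a b = γ b a)
  (hγtau : ∀ a : ATD A, γ ATD.tau a = ATD.delta)
  (hγdelta : ∀ a : ATD A, γ ATD.delta a = ATD.delta)
  (hhs : ∀ a b c : A, γ (γ (.act a) (.act b)) (.act c) = ATD.delta)

include hγcomm hγtau hγdelta hhs in
lemma gamma3 : ∀ a b c : ATD A, γ (γ a b) c = ATD.delta := by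
  intro a b c
  cases a with
  | tau => rw [hγtau, hγdelta]
  | delta => rw [hγdelta, hγdelta]
  | act a' =>
      cases b with
      | tau => rw [hγcomm (ATD.act a') ATD.tau, hγtau, hγdelta]
      | delta => rw [hγcomm (ATD.act a') ATD.delta, hγdelta, hγdelta]
      | act b' =>
          cases c with
          | tau => rw [hγcomm _ ATD.tau, hγtau]
          | delta => rw [hγcomm _ ATD.delta, hγdelta]
          | act c' => exact hhs a' b' c'

end Gamma

lemma sz_pos (t : Tm A) : 0 < sz t := by
  cases t <;> simp [sz]

section Absorb

variable (hγdelta : ∀ a : ATD A, γ ATD.delta a = ATD.delta)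
  (hg3 : ∀ a b c : ATD A, γ (γ a b) c = ATD.delta)

include hγdelta hg3 in
/-- Structure of a triple communication of basic terms: it is either δ or a
single delay of another triple communication. -/
lemma triple_classify :
    ∀ {b : Tm A}, Basic b → ∀ {c : Tm A}, Basic c → ∀ {d : Tm A}, Basic d →
    ((sbod b = none ∨ sbod c = none ∨ sbod d = none) ∧
       Dv γ (.cm (.cm b c) d) (.und .delta)) ∨
    (∃ qb qc qd, sbod b = some qb ∧ sbod c = some qc ∧ sbod d = some qd ∧
       Dv γ (.cm (.cm b c) d) (.delay (.cm (.cm qb qc) qd))) := by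
  intro b hb
  induction hb with
  | @alt b1 b2 hb1 hb2 ih1 ih2 =>
      intro c hc d hd
      have hdist : Dv γ (.cm (.cm (.alt b1 b2) c) d)
          (.alt (.cm (.cm b1 c) d) (.cm (.cm b2 c) d)) :=
        (Deriv.cmCongr (Deriv.CM8 b1 b2 c) (Deriv.refl d)).trans
          (Deriv.CM8 (.cm b1 c) (.cm b2 c) d)
      rcases ih1 hc hd with ⟨hn1, hD1⟩ | ⟨q1, qc, qd, hs1, hsc, hsd, hD1⟩ <;>
        rcases ih2 hc hd with ⟨hn2, hD2⟩ | ⟨q2, qc', qd', hs2, hsc', hsd', hD2⟩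
      · -- both dead
        refine Or.inl ⟨?_, hdist.trans ((Deriv.altCongr hD1 hD2).trans daddDelta)⟩
        rcases hn1 with h | h | h
        · rcases hn2 with h' | h' | h'
          · left; simp [sbod, h, h']
          · right; left; exact h'
          · right; right; exact h'
        · right; left; exact h
        · right; right; exact h
      · -- first dead, second sigma
        have h1 : sbod b1 = none := by
          rcases hn1 with h | h | h
          · exact h
          · rw [h] at hsc'; cases hsc'
          · rw [h] at hsd'; cases hsd'
        refine Or.inr ⟨q2, qc', qd', ?_, hsc', hsd', ?_⟩
        · simp [sbod, h1, hs2]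
        · exact hdist.trans ((Deriv.altCongr hD1 hD2).trans ddeltaAdd)
      · -- first sigma, second dead
        have h2 : sbod b2 = none := by
          rcases hn2 with h | h | h
          · exact h
          · rw [h] at hsc; cases hsc
          · rw [h] at hsd; cases hsd
        refine Or.inr ⟨q1, qc, qd, ?_, hsc, hsd, ?_⟩
        · simp [sbod, h2, hs1]
        · exact hdist.trans ((Deriv.altCongr hD1 hD2).trans
            (dcomm.trans ddeltaAdd))
      · -- both sigma
        obtain rfl : qc = qc' := Option.some.inj (hsc.symm.trans hsc')
        obtain rfl : qd = qd' := Option.some.inj (hsd.symm.trans hsd')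
        refine Or.inr ⟨.alt q1 q2, qc, qd, ?_, hsc, hsd, ?_⟩
        · simp [sbod, hs1, hs2]
        · refine hdist.trans ((Deriv.altCongr hD1 hD2).trans
            ((Deriv.DRT1 _ _).trans (Deriv.delayCongr ?_)))
          exact (Deriv.CM8 (.cm q1 qc) (.cm q2 qc) qd).symm.trans
            (Deriv.cmCongr (Deriv.CM8 q1 q2 qc).symm (Deriv.refl qd))
  | und a =>
      -- b = und a: action atom; recurse over c
      intro c hc
      induction hc with
      | und a' =>
          intro d hd
          refine Or.inl ⟨Or.inl (by simp [sbod]), ?_⟩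
          exact (Deriv.cmCongr (Deriv.CFDR a a') (Deriv.refl d)).trans
            (dead_cm (hg3 a a') hd).1
      | @pre a' ha' u hu ihu =>
          intro d hd
          refine Or.inl ⟨Or.inl (by simp [sbod]), ?_⟩
          exact (Deriv.cmCongr ((Deriv.CM6DR a a' u).trans
            (Deriv.seqCongr (Deriv.CFDR a a') (Deriv.refl u))) (Deriv.refl d)).trans
            ((dead_cm (hg3 a a') hd).2 u)
      | @delay u hu ihu =>
          intro d hd
          refine Or.inl ⟨Or.inl (by simp [sbod]), ?_⟩
          have h1 : Dv γ (.cm (.und a) (.delay u)) (.und .delta) :=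
            (Deriv.cmCongr nu_und (Deriv.refl _)).trans (Deriv.DRCM3 _ u)
          exact (Deriv.cmCongr h1 (Deriv.refl d)).trans (dead_cm hγdelta hd).1
      | @alt c1 c2 hc1 hc2 ih1 ih2 =>
          intro d hd
          have hdist : Dv γ (.cm (.cm (.und a) (.alt c1 c2)) d)
              (.alt (.cm (.cm (.und a) c1) d) (.cm (.cm (.und a) c2) d)) :=
            (Deriv.cmCongr (Deriv.CM9 _ c1 c2) (Deriv.refl d)).trans
              (Deriv.CM8 _ _ d)
          rcases ih1 hd with ⟨hn1, hD1⟩ | ⟨qb, q1, qd, hsb, _, _, _⟩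
          · rcases ih2 hd with ⟨hn2, hD2⟩ | ⟨qb, q2, qd, hsb, _, _, _⟩
            · exact Or.inl ⟨Or.inl (by simp [sbod]),
                hdist.trans ((Deriv.altCongr hD1 hD2).trans daddDelta)⟩
            · simp [sbod] at hsb
          · simp [sbod] at hsb
  | @pre a ha t ht iht =>
      intro c hc
      induction hc with
      | und a' =>
          intro d hd
          refine Or.inl ⟨Or.inl (by simp [sbod]), ?_⟩
          exact (Deriv.cmCongr ((Deriv.CM5DR a a' t).trans
            (Deriv.seqCongr (Deriv.CFDR a a') (Deriv.refl t))) (Deriv.refl d)).trans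
            ((dead_cm (hg3 a a') hd).2 t)
      | @pre a' ha' u hu ihu =>
          intro d hd
          refine Or.inl ⟨Or.inl (by simp [sbod]), ?_⟩
          exact (Deriv.cmCongr ((Deriv.CM7DR a a' t u).trans
            (Deriv.seqCongr (Deriv.CFDR a a') (Deriv.refl _))) (Deriv.refl d)).trans
            ((dead_cm (hg3 a a') hd).2 _)
      | @delay u hu ihu =>
          intro d hd
          refine Or.inl ⟨Or.inl (by simp [sbod]), ?_⟩
          have h1 : Dv γ (.cm (.seq (.und a) t) (.delay u)) (.und .delta) :=
            (Deriv.cmCongr nu_pre (Deriv.refl _)).trans (Deriv.DRCM3 _ u)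
          exact (Deriv.cmCongr h1 (Deriv.refl d)).trans (dead_cm hγdelta hd).1
      | @alt c1 c2 hc1 hc2 ih1 ih2 =>
          intro d hd
          have hdist : Dv γ (.cm (.cm (.seq (.und a) t) (.alt c1 c2)) d)
              (.alt (.cm (.cm (.seq (.und a) t) c1) d)
                (.cm (.cm (.seq (.und a) t) c2) d)) :=
            (Deriv.cmCongr (Deriv.CM9 _ c1 c2) (Deriv.refl d)).trans
              (Deriv.CM8 _ _ d)
          rcases ih1 hd with ⟨hn1, hD1⟩ | ⟨qb, q1, qd, hsb, _, _, _⟩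
          · rcases ih2 hd with ⟨hn2, hD2⟩ | ⟨qb, q2, qd, hsb, _, _, _⟩
            · exact Or.inl ⟨Or.inl (by simp [sbod]),
                hdist.trans ((Deriv.altCongr hD1 hD2).trans daddDelta)⟩
            · simp [sbod] at hsb
          · simp [sbod] at hsb
  | @delay t ht iht =>
      intro c hc
      induction hc with
      | und a' =>
          intro d hd
          refine Or.inl ⟨Or.inr (Or.inl (by simp [sbod])), ?_⟩
          have h1 : Dv γ (.cm (.delay t) (.und a')) (.und .delta) :=
            (Deriv.cmCongr (Deriv.refl _) nu_und).trans (Deriv.DRCM4 t _)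
          exact (Deriv.cmCongr h1 (Deriv.refl d)).trans (dead_cm hγdelta hd).1
      | @pre a' ha' u hu ihu =>
          intro d hd
          refine Or.inl ⟨Or.inr (Or.inl (by simp [sbod])), ?_⟩
          have h1 : Dv γ (.cm (.delay t) (.seq (.und a') u)) (.und .delta) :=
            (Deriv.cmCongr (Deriv.refl _) nu_pre).trans (Deriv.DRCM4 t _)
          exact (Deriv.cmCongr h1 (Deriv.refl d)).trans (dead_cm hγdelta hd).1
      | @delay u hu ihu =>
          intro d hd
          have h1 : Dv γ (.cm (.delay t) (.delay u)) (.delay (.cm t u)) :=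
            Deriv.DRCM5 t u
          rcases hsd : sbod d with _ | qd
          · refine Or.inl ⟨Or.inr (Or.inr rfl), ?_⟩
            exact (Deriv.cmCongr h1 (Deriv.refl d)).trans ((cm_delay hd _).1 hsd)
          · refine Or.inr ⟨t, u, qd, by simp [sbod], by simp [sbod], rfl, ?_⟩
            exact (Deriv.cmCongr h1 (Deriv.refl d)).trans ((cm_delay hd _).2 qd hsd)
      | @alt c1 c2 hc1 hc2 ih1 ih2 =>
          intro d hd
          have hdist : Dv γ (.cm (.cm (.delay t) (.alt c1 c2)) d)
              (.alt (.cm (.cm (.delay t) c1) d) (.cm (.cm (.delay t) c2) d)) :=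
            (Deriv.cmCongr (Deriv.CM9 _ c1 c2) (Deriv.refl d)).trans
              (Deriv.CM8 _ _ d)
          rcases ih1 hd with ⟨hn1, hD1⟩ | ⟨qb, q1, qd, hsb, hsc1, hsd, hD1⟩ <;>
            rcases ih2 hd with ⟨hn2, hD2⟩ | ⟨qb', q2, qd', hsb', hsc2, hsd', hD2⟩
          · -- both dead
            refine Or.inl ⟨?_, hdist.trans ((Deriv.altCongr hD1 hD2).trans daddDelta)⟩
            rcases hn1 with h | h | h
            · simp [sbod] at h
            · rcases hn2 with h' | h' | h'
              · simp [sbod] at h'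
              · right; left; simp [sbod, h, h']
              · right; right; exact h'
            · right; right; exact h
          · -- first dead: must be because sbod c1 = none (or d)
            simp only [sbod, Option.some.injEq] at hsb'
            subst hsb'
            rcases hn1 with h | h | h
            · simp [sbod] at h
            · refine Or.inr ⟨t, q2, qd', ?_, ?_, hsd', ?_⟩
              · simp [sbod]
              · simp [sbod, h, hsc2]
              · exact hdist.trans ((Deriv.altCongr hD1 hD2).trans ddeltaAdd)
            · rw [h] at hsd'; cases hsd'
          · simp only [sbod, Option.some.injEq] at hsb
            subst hsb
            rcases hn2 with h | h | h
            · simp [sbod] at h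
            · refine Or.inr ⟨t, q1, qd, ?_, ?_, hsd, ?_⟩
              · simp [sbod]
              · simp [sbod, h, hsc1]
              · exact hdist.trans ((Deriv.altCongr hD1 hD2).trans
                  (dcomm.trans ddeltaAdd))
            · rw [h] at hsd; cases hsd
          · -- both sigma
            simp only [sbod, Option.some.injEq] at hsb hsb'
            subst hsb
            subst hsb'
            obtain rfl : qd = qd' := Option.some.inj (hsd.symm.trans hsd')
            refine Or.inr ⟨t, .alt q1 q2, qd, by simp [sbod], ?_, hsd, ?_⟩
            · simp [sbod, hsc1, hsc2]
            · refine hdist.trans ((Deriv.altCongr hD1 hD2).trans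
                ((Deriv.DRT1 _ _).trans (Deriv.delayCongr ?_)))
              exact (Deriv.CM8 (.cm t q1) (.cm t q2) qd).symm.trans
                (Deriv.cmCongr (Deriv.CM9 t q1 q2).symm (Deriv.refl qd))

include hγdelta hg3 in
/-- The key absorption properties: a triple communication (left-merged with a
context) is absorbed by the corresponding double communication left-merged
with the remaining context. -/
lemma absorb : ∀ N : ℕ,
    (∀ b c d : Tm A, Basic b → Basic c → Basic d → sz b + sz c + sz d ≤ N →
      Sb γ (.cm (.cm b c) d) (.lm (.cm b c) d)) ∧
    (∀ b c d e : Tm A, Basic b → Basic c → Basic d → Basic e →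
      sz b + sz c + sz d + sz e ≤ N →
      Sb γ (.lm (.cm (.cm b c) d) e) (.lm (.cm b c) (.par d e))) := by
  intro N
  induction N with
  | zero =>
      constructor
      · intro b c d _ _ _ h
        have := sz_pos b; have := sz_pos c; have := sz_pos d; omega
      · intro b c d e _ _ _ _ h
        have := sz_pos b; have := sz_pos c; have := sz_pos d; have := sz_pos e; omega
  | succ N ih =>
      constructor
      · intro b c d hb hc hd hsz
        rcases triple_classify hγdelta hg3 hb hc hd with ⟨_, hD⟩ |
          ⟨qb, qc, qd, hsb, hsc, hsd, hD⟩
        · exact sb_congr hD.symm (Deriv.refl _) sb_delta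
        · obtain ⟨hqb, hszb⟩ := sbod_basic hb qb hsb
          obtain ⟨hqc, hszc⟩ := sbod_basic hc qc hsc
          obtain ⟨hqd, hszd⟩ := sbod_basic hd qd hsd
          obtain ⟨pb, hpb⟩ := split_sig hb hsb
          obtain ⟨pc, hpc⟩ := split_sig hc hsc
          obtain ⟨pd, hpd⟩ := split_sig hd hsd
          have h1 : Sb γ (.cm (.delay qb) (.delay qc)) (.cm b c) :=
            sb_trans
              (sb_cm_monoR (sb_congr (Deriv.refl _) hpc.symm (sb_inr sb_refl)))
              (sb_cm_monoL (sb_congr (Deriv.refl _) hpb.symm (sb_inr sb_refl)))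
          have h3 : Sb γ (.delay (.cm qb qc)) (.cm b c) :=
            sb_congr (Deriv.DRCM5 qb qc) (Deriv.refl _) h1
          have h4 : Sb γ (.lm (.delay (.cm qb qc)) d) (.lm (.cm b c) d) :=
            sb_lm_mono h3
          have h5 : Dv γ (.lm (.delay (.cm qb qc)) d)
              (.delay (.lm (.cm qb qc) qd)) :=
            (Deriv.lmCongr (Deriv.refl _) hpd).trans (Deriv.DRCM2 _ pd qd)
          have h6 : Sb γ (.delay (.cm (.cm qb qc) qd))
              (.delay (.lm (.cm qb qc) qd)) :=
            sb_delay_mono (ih.1 qb qc qd hqb hqc hqd (by omega))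
          exact sb_congr hD.symm (Deriv.refl _)
            (sb_trans h6 (sb_congr h5 (Deriv.refl _) h4))
      · intro b c d e hb hc hd he hsz
        rcases triple_classify hγdelta hg3 hb hc hd with ⟨_, hD⟩ |
          ⟨qb, qc, qd, hsb, hsc, hsd, hD⟩
        · have hL : Dv γ (.lm (.cm (.cm b c) d) e) (.und .delta) :=
            (Deriv.lmCongr hD (Deriv.refl e)).trans
              ((Deriv.CM2DR .delta e).trans (Deriv.A7DR e))
          exact sb_congr hL.symm (Deriv.refl _) sb_delta
        · rcases hse : sbod e with _ | qe
          · obtain ⟨pe, hpe⟩ := split_nu he hse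
            have hL : Dv γ (.lm (.cm (.cm b c) d) e) (.und .delta) :=
              (Deriv.lmCongr hD hpe).trans (Deriv.DRCM1 _ pe)
            exact sb_congr hL.symm (Deriv.refl _) sb_delta
          · obtain ⟨hqb, hszb⟩ := sbod_basic hb qb hsb
            obtain ⟨hqc, hszc⟩ := sbod_basic hc qc hsc
            obtain ⟨hqd, hszd⟩ := sbod_basic hd qd hsd
            obtain ⟨hqe, hsze⟩ := sbod_basic he qe hse
            obtain ⟨pb, hpb⟩ := split_sig hb hsb
            obtain ⟨pc, hpc⟩ := split_sig hc hsc
            obtain ⟨pe, hpe⟩ := split_sig he hse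
            have hL : Dv γ (.lm (.cm (.cm b c) d) e)
                (.delay (.lm (.cm (.cm qb qc) qd) qe)) :=
              (Deriv.lmCongr hD hpe).trans (Deriv.DRCM2 _ pe qe)
            have h1 : Sb γ (.cm (.delay qb) (.delay qc)) (.cm b c) :=
              sb_trans
                (sb_cm_monoR (sb_congr (Deriv.refl _) hpc.symm (sb_inr sb_refl)))
                (sb_cm_monoL (sb_congr (Deriv.refl _) hpb.symm (sb_inr sb_refl)))
            have h3 : Sb γ (.delay (.cm qb qc)) (.cm b c) :=
              sb_congr (Deriv.DRCM5 qb qc) (Deriv.refl _) h1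
            have h4 : Sb γ (.lm (.delay (.cm qb qc)) (.par d e))
                (.lm (.cm b c) (.par d e)) := sb_lm_mono h3
            obtain ⟨P, hP⟩ := (par_split hd he).2 qd qe hsd hse
            have h5 : Dv γ (.lm (.delay (.cm qb qc)) (.par d e))
                (.delay (.lm (.cm qb qc) (.par qd qe))) :=
              (Deriv.lmCongr (Deriv.refl _) hP).trans (Deriv.DRCM2 _ P _)
            have h6 : Sb γ (.delay (.lm (.cm (.cm qb qc) qd) qe))
                (.delay (.lm (.cm qb qc) (.par qd qe))) :=
              sb_delay_mono (ih.2 qb qc qd qe hqb hqc hqd hqe (by omega))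
            exact sb_congr hL.symm (Deriv.refl _)
              (sb_trans h6 (sb_congr h5 (Deriv.refl _) h4))

end Absorb

section Elim

lemma seq_elim : ∀ {s : Tm A}, Basic s → ∀ {t : Tm A}, Basic t →
    ∃ b, Basic b ∧ Dv γ (.seq s t) b := by
  intro s hs
  induction hs with
  | und a =>
      intro t ht
      by_cases ha : a = ATD.delta
      · subst ha
        exact ⟨.und .delta, Basic.und _, Deriv.A7DR t⟩
      · exact ⟨.seq (.und a) t, Basic.pre a ha ht, Deriv.refl _⟩
  | @pre a ha u hu ihu =>
      intro t ht
      obtain ⟨b, hb, hD⟩ := ihu ht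
      exact ⟨.seq (.und a) b, Basic.pre a ha hb,
        (Deriv.A5 (.und a) u t).trans (Deriv.seqCongr (Deriv.refl _) hD)⟩
  | @delay u hu ihu =>
      intro t ht
      obtain ⟨b, hb, hD⟩ := ihu ht
      exact ⟨.delay b, Basic.delay hb,
        (Deriv.DRT2 u t).trans (Deriv.delayCongr hD)⟩
  | @alt u v hu hv ihu ihv =>
      intro t ht
      obtain ⟨b1, hb1, hD1⟩ := ihu ht
      obtain ⟨b2, hb2, hD2⟩ := ihv ht
      exact ⟨.alt b1 b2, Basic.alt hb1 hb2,
        (Deriv.A4 u v t).trans (Deriv.altCongr hD1 hD2)⟩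

lemma timeout_elim : ∀ {t : Tm A}, Basic t →
    ∃ b, Basic b ∧ Dv γ (.timeout t) b := by
  intro t ht
  induction ht with
  | und a => exact ⟨.und a, Basic.und a, Deriv.DRTO1 a⟩
  | @pre a ha u hu ihu =>
      exact ⟨.seq (.und a) u, Basic.pre a ha hu,
        (Deriv.DRTO3 (.und a) u).trans
          (Deriv.seqCongr (Deriv.DRTO1 a) (Deriv.refl u))⟩
  | @delay u hu ihu => exact ⟨.und .delta, Basic.und _, Deriv.DRTO4 u⟩
  | @alt u v hu hv ihu ihv =>
      obtain ⟨b1, hb1, hD1⟩ := ihu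
      obtain ⟨b2, hb2, hD2⟩ := ihv
      exact ⟨.alt b1 b2, Basic.alt hb1 hb2,
        (Deriv.DRTO2 u v).trans (Deriv.altCongr hD1 hD2)⟩

lemma encap_und_elim (H : Set A) (a : ATD A) :
    ∃ g : ATD A, Dv γ (.encap H (.und a)) (.und g) ∧ (g = a ∨ g = .delta) := by
  cases a with
  | act x =>
      by_cases hx : x ∈ H
      · exact ⟨.delta, Deriv.D2DR x H hx, Or.inr rfl⟩
      · refine ⟨.act x, Deriv.D1DR _ H ?_, Or.inl rfl⟩
        intro b hb
        cases hb; exact hx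
  | tau => exact ⟨.tau, Deriv.D1DR _ H (by intro b hb; cases hb), Or.inl rfl⟩
  | delta => exact ⟨.delta, Deriv.D1DR _ H (by intro b hb; cases hb), Or.inl rfl⟩

lemma encap_elim (H : Set A) : ∀ {t : Tm A}, Basic t →
    ∃ b, Basic b ∧ Dv γ (.encap H t) b := by
  intro t ht
  induction ht with
  | und a =>
      obtain ⟨g, hD, _⟩ := encap_und_elim H a
      exact ⟨.und g, Basic.und g, hD⟩
  | @pre a ha u hu ihu =>
      obtain ⟨b, hb, hD⟩ := ihu
      obtain ⟨g, hDg, _⟩ := encap_und_elim H a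
      have h1 : Dv γ (.encap H (.seq (.und a) u)) (.seq (.und g) b) :=
        (Deriv.D4 H (.und a) u).trans (Deriv.seqCongr hDg hD)
      obtain ⟨b', hb', hD'⟩ := seq_elim (Basic.und g) hb
      exact ⟨b', hb', h1.trans hD'⟩
  | @delay u hu ihu =>
      obtain ⟨b, hb, hD⟩ := ihu
      exact ⟨.delay b, Basic.delay hb, (Deriv.DRD H u).trans (Deriv.delayCongr hD)⟩
  | @alt u v hu hv ihu ihv =>
      obtain ⟨b1, hb1, hD1⟩ := ihu
      obtain ⟨b2, hb2, hD2⟩ := ihv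
      exact ⟨.alt b1 b2, Basic.alt hb1 hb2,
        (Deriv.D3 H u v).trans (Deriv.altCongr hD1 hD2)⟩

lemma abstr_und_elim (I : Set A) (a : ATD A) :
    ∃ g : ATD A, Dv γ (.abstr I (.und a)) (.und g) := by
  cases a with
  | act x =>
      by_cases hx : x ∈ I
      · exact ⟨.tau, Deriv.TI2DR x I hx⟩
      · refine ⟨.act x, Deriv.TI1DR _ I ?_⟩
        intro b hb
        cases hb; exact hx
  | tau => exact ⟨.tau, Deriv.TI1DR _ I (by intro b hb; cases hb)⟩
  | delta => exact ⟨.delta, Deriv.TI1DR _ I (by intro b hb; cases hb)⟩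

lemma abstr_elim (I : Set A) : ∀ {t : Tm A}, Basic t →
    ∃ b, Basic b ∧ Dv γ (.abstr I t) b := by
  intro t ht
  induction ht with
  | und a =>
      obtain ⟨g, hD⟩ := abstr_und_elim I a
      exact ⟨.und g, Basic.und g, hD⟩
  | @pre a ha u hu ihu =>
      obtain ⟨b, hb, hD⟩ := ihu
      obtain ⟨g, hDg⟩ := abstr_und_elim I a
      have h1 : Dv γ (.abstr I (.seq (.und a) u)) (.seq (.und g) b) :=
        (Deriv.TI4 I (.und a) u).trans (Deriv.seqCongr hDg hD)
      obtain ⟨b', hb', hD'⟩ := seq_elim (Basic.und g) hb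
      exact ⟨b', hb', h1.trans hD'⟩
  | @delay u hu ihu =>
      obtain ⟨b, hb, hD⟩ := ihu
      exact ⟨.delay b, Basic.delay hb, (Deriv.DRTI I u).trans (Deriv.delayCongr hD)⟩
  | @alt u v hu hv ihu ihv =>
      obtain ⟨b1, hb1, hD1⟩ := ihu
      obtain ⟨b2, hb2, hD2⟩ := ihv
      exact ⟨.alt b1 b2, Basic.alt hb1 hb2,
        (Deriv.TI3 I u v).trans (Deriv.altCongr hD1 hD2)⟩

lemma lmcm_elim : ∀ N : ℕ, ∀ b c : Tm A, Basic b → Basic c → sz b + sz c ≤ N →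
    (∃ u, Basic u ∧ Dv γ (.lm b c) u) ∧ (∃ u, Basic u ∧ Dv γ (.cm b c) u) := by
  intro N
  induction N with
  | zero =>
      intro b c _ _ h
      have := sz_pos b; have := sz_pos c; omega
  | succ N ih =>
      intro b c hb hc hsz
      have parAt : ∀ b' c' : Tm A, Basic b' → Basic c' → sz b' + sz c' ≤ N →
          ∃ u, Basic u ∧ Dv γ (.par b' c') u := by
        intro b' c' hb' hc' h
        obtain ⟨u1, hu1, hD1⟩ := (ih b' c' hb' hc' h).1
        obtain ⟨u2, hu2, hD2⟩ := (ih c' b' hc' hb' (by omega)).1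
        obtain ⟨u3, hu3, hD3⟩ := (ih b' c' hb' hc' h).2
        exact ⟨.alt (.alt u1 u2) u3, Basic.alt (Basic.alt hu1 hu2) hu3,
          (Deriv.CM1 b' c').trans (Deriv.altCongr (Deriv.altCongr hD1 hD2) hD3)⟩
      constructor
      · -- left merge
        cases hb with
        | und a =>
            obtain ⟨u, hu, hD⟩ := seq_elim (Basic.und a) hc
            exact ⟨u, hu, (Deriv.CM2DR a c).trans hD⟩
        | @pre a ha t ht =>
            obtain ⟨v, hv, hDv⟩ := parAt t c ht hc (by simp [sz] at hsz ⊢; omega)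
            obtain ⟨u, hu, hD⟩ := seq_elim (Basic.und a) hv
            exact ⟨u, hu, ((Deriv.CM3DR a t c).trans
              (Deriv.seqCongr (Deriv.refl _) hDv)).trans hD⟩
        | @delay t ht =>
            rcases hsc : sbod c with _ | qc
            · obtain ⟨p, hp⟩ := split_nu hc hsc
              exact ⟨.und .delta, Basic.und _,
                (Deriv.lmCongr (Deriv.refl _) hp).trans (Deriv.DRCM1 t p)⟩
            · obtain ⟨p, hp⟩ := split_sig hc hsc
              obtain ⟨hqc, hqcs⟩ := sbod_basic hc qc hsc
              obtain ⟨u, hu, hD⟩ := (ih t qc ht hqc (by simp [sz] at hsz; omega)).1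
              exact ⟨.delay u, Basic.delay hu,
                ((Deriv.lmCongr (Deriv.refl _) hp).trans (Deriv.DRCM2 t p qc)).trans
                  (Deriv.delayCongr hD)⟩
        | @alt b1 b2 hb1 hb2 =>
            obtain ⟨u1, hu1, hD1⟩ := (ih b1 c hb1 hc (by simp [sz] at hsz; omega)).1
            obtain ⟨u2, hu2, hD2⟩ := (ih b2 c hb2 hc (by simp [sz] at hsz; omega)).1
            exact ⟨.alt u1 u2, Basic.alt hu1 hu2,
              (Deriv.CM4 b1 b2 c).trans (Deriv.altCongr hD1 hD2)⟩
      · -- communication merge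
        cases hb with
        | und a =>
            cases hc with
            | und a' => exact ⟨.und (γ a a'), Basic.und _, Deriv.CFDR a a'⟩
            | @pre a' ha' v hv =>
                obtain ⟨u, hu, hD⟩ := seq_elim (Basic.und (γ a a')) hv
                exact ⟨u, hu, ((Deriv.CM6DR a a' v).trans
                  (Deriv.seqCongr (Deriv.CFDR a a') (Deriv.refl v))).trans hD⟩
            | @delay v hv =>
                exact ⟨.und .delta, Basic.und _,
                  (Deriv.cmCongr nu_und (Deriv.refl _)).trans (Deriv.DRCM3 _ v)⟩
            | @alt c1 c2 hc1 hc2 =>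
                obtain ⟨u1, hu1, hD1⟩ := (ih _ c1 (Basic.und a) hc1
                  (by simp [sz] at hsz ⊢; omega)).2
                obtain ⟨u2, hu2, hD2⟩ := (ih _ c2 (Basic.und a) hc2
                  (by simp [sz] at hsz ⊢; omega)).2
                exact ⟨.alt u1 u2, Basic.alt hu1 hu2,
                  (Deriv.CM9 _ c1 c2).trans (Deriv.altCongr hD1 hD2)⟩
        | @pre a ha t ht =>
            cases hc with
            | und a' =>
                obtain ⟨u, hu, hD⟩ := seq_elim (Basic.und (γ a a')) ht
                exact ⟨u, hu, ((Deriv.CM5DR a a' t).trans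
                  (Deriv.seqCongr (Deriv.CFDR a a') (Deriv.refl t))).trans hD⟩
            | @pre a' ha' v hv =>
                obtain ⟨w, hw, hDw⟩ := parAt t v ht hv (by simp [sz] at hsz ⊢; omega)
                obtain ⟨u, hu, hD⟩ := seq_elim (Basic.und (γ a a')) hw
                exact ⟨u, hu, (((Deriv.CM7DR a a' t v).trans
                  (Deriv.seqCongr (Deriv.CFDR a a') hDw))).trans hD⟩
            | @delay v hv =>
                exact ⟨.und .delta, Basic.und _,
                  (Deriv.cmCongr nu_pre (Deriv.refl _)).trans (Deriv.DRCM3 _ v)⟩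
            | @alt c1 c2 hc1 hc2 =>
                obtain ⟨u1, hu1, hD1⟩ := (ih _ c1 (Basic.pre a ha ht) hc1
                  (by simp [sz] at hsz ⊢; omega)).2
                obtain ⟨u2, hu2, hD2⟩ := (ih _ c2 (Basic.pre a ha ht) hc2
                  (by simp [sz] at hsz ⊢; omega)).2
                exact ⟨.alt u1 u2, Basic.alt hu1 hu2,
                  (Deriv.CM9 _ c1 c2).trans (Deriv.altCongr hD1 hD2)⟩
        | @delay t ht =>
            cases hc with
            | und a' =>
                exact ⟨.und .delta, Basic.und _,
                  (Deriv.cmCongr (Deriv.refl _) nu_und).trans (Deriv.DRCM4 t _)⟩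
            | @pre a' ha' v hv =>
                exact ⟨.und .delta, Basic.und _,
                  (Deriv.cmCongr (Deriv.refl _) nu_pre).trans (Deriv.DRCM4 t _)⟩
            | @delay v hv =>
                obtain ⟨u, hu, hD⟩ := (ih t v ht hv (by simp [sz] at hsz; omega)).2
                exact ⟨.delay u, Basic.delay hu,
                  (Deriv.DRCM5 t v).trans (Deriv.delayCongr hD)⟩
            | @alt c1 c2 hc1 hc2 =>
                obtain ⟨u1, hu1, hD1⟩ := (ih _ c1 (Basic.delay ht) hc1
                  (by simp [sz] at hsz ⊢; omega)).2
                obtain ⟨u2, hu2, hD2⟩ := (ih _ c2 (Basic.delay ht) hc2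
                  (by simp [sz] at hsz ⊢; omega)).2
                exact ⟨.alt u1 u2, Basic.alt hu1 hu2,
                  (Deriv.CM9 _ c1 c2).trans (Deriv.altCongr hD1 hD2)⟩
        | @alt b1 b2 hb1 hb2 =>
            obtain ⟨u1, hu1, hD1⟩ := (ih b1 c hb1 hc (by simp [sz] at hsz; omega)).2
            obtain ⟨u2, hu2, hD2⟩ := (ih b2 c hb2 hc (by simp [sz] at hsz; omega)).2
            exact ⟨.alt u1 u2, Basic.alt hu1 hu2,
              (Deriv.CM8 b1 b2 c).trans (Deriv.altCongr hD1 hD2)⟩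

lemma lm_elim {b c : Tm A} (hb : Basic b) (hc : Basic c) :
    ∃ u, Basic u ∧ Dv γ (.lm b c) u :=
  (lmcm_elim (sz b + sz c) b c hb hc le_rfl).1

lemma cm_elim {b c : Tm A} (hb : Basic b) (hc : Basic c) :
    ∃ u, Basic u ∧ Dv γ (.cm b c) u :=
  (lmcm_elim (sz b + sz c) b c hb hc le_rfl).2

lemma par_elim {b c : Tm A} (hb : Basic b) (hc : Basic c) :
    ∃ u, Basic u ∧ Dv γ (.par b c) u := by
  obtain ⟨u1, hu1, hD1⟩ := lm_elim hb hc
  obtain ⟨u2, hu2, hD2⟩ := lm_elim hc hb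
  obtain ⟨u3, hu3, hD3⟩ := cm_elim hb hc
  exact ⟨.alt (.alt u1 u2) u3, Basic.alt (Basic.alt hu1 hu2) hu3,
    (Deriv.CM1 b c).trans (Deriv.altCongr (Deriv.altCongr hD1 hD2) hD3)⟩

/-- Elimination theorem: every closed recursion-free term is derivably equal
to a basic term. -/
lemma plain_elim : ∀ {t : Tm A}, Tm.Plain t → ∃ b, Basic b ∧ Dv γ t b := by
  intro t
  induction t with
  | und a => exact fun _ => ⟨.und a, Basic.und a, Deriv.refl _⟩
  | alt t u iht ihu =>
      intro hp
      obtain ⟨b1, hb1, hD1⟩ := iht hp.1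
      obtain ⟨b2, hb2, hD2⟩ := ihu hp.2
      exact ⟨.alt b1 b2, Basic.alt hb1 hb2, Deriv.altCongr hD1 hD2⟩
  | seq t u iht ihu =>
      intro hp
      obtain ⟨b1, hb1, hD1⟩ := iht hp.1
      obtain ⟨b2, hb2, hD2⟩ := ihu hp.2
      obtain ⟨b, hb, hD⟩ := seq_elim hb1 hb2
      exact ⟨b, hb, (Deriv.seqCongr hD1 hD2).trans hD⟩
  | delay t iht =>
      intro hp
      obtain ⟨b, hb, hD⟩ := iht hp
      exact ⟨.delay b, Basic.delay hb, Deriv.delayCongr hD⟩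
  | par t u iht ihu =>
      intro hp
      obtain ⟨b1, hb1, hD1⟩ := iht hp.1
      obtain ⟨b2, hb2, hD2⟩ := ihu hp.2
      obtain ⟨b, hb, hD⟩ := par_elim hb1 hb2
      exact ⟨b, hb, (Deriv.parCongr hD1 hD2).trans hD⟩
  | lm t u iht ihu =>
      intro hp
      obtain ⟨b1, hb1, hD1⟩ := iht hp.1
      obtain ⟨b2, hb2, hD2⟩ := ihu hp.2
      obtain ⟨b, hb, hD⟩ := lm_elim hb1 hb2
      exact ⟨b, hb, (Deriv.lmCongr hD1 hD2).trans hD⟩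
  | cm t u iht ihu =>
      intro hp
      obtain ⟨b1, hb1, hD1⟩ := iht hp.1
      obtain ⟨b2, hb2, hD2⟩ := ihu hp.2
      obtain ⟨b, hb, hD⟩ := cm_elim hb1 hb2
      exact ⟨b, hb, (Deriv.cmCongr hD1 hD2).trans hD⟩
  | encap H t iht =>
      intro hp
      obtain ⟨b1, hb1, hD1⟩ := iht hp
      obtain ⟨b, hb, hD⟩ := encap_elim H hb1
      exact ⟨b, hb, (Deriv.encapCongr H hD1).trans hD⟩
  | abstr I t iht =>
      intro hp
      obtain ⟨b1, hb1, hD1⟩ := iht hp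
      obtain ⟨b, hb, hD⟩ := abstr_elim I hb1
      exact ⟨b, hb, (Deriv.abstrCongr I hD1).trans hD⟩
  | timeout t iht =>
      intro hp
      obtain ⟨b1, hb1, hD1⟩ := iht hp
      obtain ⟨b, hb, hD⟩ := timeout_elim hb1
      exact ⟨b, hb, (Deriv.timeoutCongr hD1).trans hD⟩
  | var X => exact fun hp => absurd hp (by simp [Tm.Plain])
  | recc E X => exact fun hp => absurd hp (by simp [Tm.Plain])
  | shift t iht => exact fun hp => absurd hp (by simp [Tm.Plain])
  | tfp t iht => exact fun hp => absurd hp (by simp [Tm.Plain])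

end Elim

/-- All ways of selecting one element from a list together with the remaining list. -/
def sel {α : Type} : List α → List (α × List α)
  | [] => []
  | a :: l => (a, l) :: (sel l).map (fun p => (p.1, a :: p.2))

/-- All ways of selecting an ordered pair of elements from a list together with
the remaining list. -/
def sel2 {α : Type} : List α → List (α × α × List α)
  | [] => []
  | a :: l => (sel l).map (fun p => (a, p.1, p.2)) ++
      (sel2 l).map (fun q => (q.1, q.2.1, a :: q.2.2))

lemma parList_cons_ne {t : Tm A} {L : List (Tm A)} (h : L ≠ []) :
    parList (t :: L) = .par t (parList L) := by
  cases L with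
  | nil => exact absurd rfl h
  | cons u us => rfl

lemma parList_plain {L : List (Tm A)} (h : ∀ t ∈ L, Tm.Plain t) :
    Tm.Plain (parList L) := by
  induction L with
  | nil => trivial
  | cons t ts ih =>
      cases ts with
      | nil => exact h t (by simp)
      | cons u us =>
          exact ⟨h t (by simp), ih (fun v hv => h v (by simp [hv]))⟩

lemma sel_mem_fst {α : Type} {l : List α} {p : α × List α} (h : p ∈ sel l) :
    p.1 ∈ l := by
  induction l generalizing p with
  | nil => simp [sel] at h
  | cons a l ih =>
      simp only [sel, List.mem_cons, List.mem_map] at h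
      rcases h with rfl | ⟨q, hq, rfl⟩
      · simp
      · simp [ih hq]

lemma sel_mem_snd {α : Type} {l : List α} {p : α × List α} (h : p ∈ sel l) :
    ∀ i ∈ p.2, i ∈ l := by
  induction l generalizing p with
  | nil => simp [sel] at h
  | cons a l ih =>
      simp only [sel, List.mem_cons, List.mem_map] at h
      rcases h with rfl | ⟨q, hq, rfl⟩
      · intro i hi; simp [hi]
      · intro i hi
        simp only [List.mem_cons] at hi
        rcases hi with rfl | hi
        · simp
        · simp [ih hq i hi]

lemma sel_mem_len {α : Type} {l : List α} {p : α × List α} (h : p ∈ sel l) :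
    p.2.length + 1 = l.length := by
  induction l generalizing p with
  | nil => simp [sel] at h
  | cons a l ih =>
      simp only [sel, List.mem_cons, List.mem_map] at h
      rcases h with rfl | ⟨q, hq, rfl⟩
      · simp
      · simpa using ih hq

lemma sel2_mem {α : Type} {l : List α} {q : α × α × List α} (h : q ∈ sel2 l) :
    q.1 ∈ l ∧ q.2.1 ∈ l ∧ (∀ i ∈ q.2.2, i ∈ l) ∧ q.2.2.length + 2 = l.length := by
  induction l generalizing q with
  | nil => simp [sel2] at h
  | cons a l ih =>
      simp only [sel2, List.mem_append, List.mem_map] at h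
      rcases h with ⟨p, hp, rfl⟩ | ⟨r, hr, rfl⟩
      · refine ⟨by simp, by simp [sel_mem_fst hp], ?_, by simpa using sel_mem_len hp⟩
        intro i hi; simp [sel_mem_snd hp i hi]
      · obtain ⟨h1, h2, h3, h4⟩ := ih hr
        refine ⟨by simp [h1], by simp [h2], ?_, by simpa using h4⟩
        intro i hi
        simp only [List.mem_cons] at hi
        rcases hi with rfl | hi
        · simp
        · simp [h3 i hi]

lemma sel2_prov {α : Type} {l : List α} {j k : α} {r : List α}
    (h : (j, k, r) ∈ sel2 l) : ∃ rj, (j, rj) ∈ sel l ∧ (k, r) ∈ sel rj := by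
  induction l generalizing j k r with
  | nil => simp [sel2] at h
  | cons a l ih =>
      simp only [sel2, List.mem_append, List.mem_map] at h
      rcases h with ⟨p, hp, hpe⟩ | ⟨q, hq, hqe⟩
      · obtain ⟨rfl, rfl, rfl⟩ : a = j ∧ p.1 = k ∧ p.2 = r := by
          refine ⟨congrArg Prod.fst hpe, ?_, ?_⟩
          · exact congrArg (fun z => z.2.1) hpe
          · exact congrArg (fun z => z.2.2) hpe
        exact ⟨l, by simp [sel], by simpa using hp⟩
      · obtain ⟨rfl, rfl, rfl⟩ : q.1 = j ∧ q.2.1 = k ∧ a :: q.2.2 = r := by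
          refine ⟨congrArg Prod.fst hqe, ?_, ?_⟩
          · exact congrArg (fun z => z.2.1) hqe
          · exact congrArg (fun z => z.2.2) hqe
        obtain ⟨rj, hrj, hkr⟩ := ih (by
          show (q.1, q.2.1, q.2.2) ∈ sel2 l
          simpa using hq)
        refine ⟨a :: rj, ?_, ?_⟩
        · simp only [sel, List.mem_cons, List.mem_map]
          exact Or.inr ⟨(q.1, rj), hrj, rfl⟩
        · simp only [sel, List.mem_cons, List.mem_map]
          exact Or.inr ⟨(q.2.1, q.2.2), hkr, rfl⟩

lemma lm_altList_distrib {L : List (Tm A)} (hL : L ≠ []) (w : Tm A) :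
    Dv γ (.lm (altList L) w) (altList (L.map (fun t => .lm t w))) := by
  induction L with
  | nil => exact absurd rfl hL
  | cons t ts ih =>
      cases ts with
      | nil => exact Deriv.refl _
      | cons u us =>
          have h1 : Dv γ (.lm (altList (t :: u :: us)) w)
              (.alt (.lm t w) (.lm (altList (u :: us)) w)) :=
            (Deriv.lmCongr altList_cons (Deriv.refl w)).trans
              (Deriv.CM4 t (altList (u :: us)) w)
          exact h1.trans ((Deriv.altCongr (Deriv.refl _) (ih (by simp))).trans
            altList_cons.symm)

lemma cm_altList_distrib {L : List (Tm A)} (hL : L ≠ []) (w : Tm A) :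
    Dv γ (.cm w (altList L)) (altList (L.map (fun t => .cm w t))) := by
  induction L with
  | nil => exact absurd rfl hL
  | cons t ts ih =>
      cases ts with
      | nil => exact Deriv.refl _
      | cons u us =>
          have h1 : Dv γ (.cm w (altList (t :: u :: us)))
              (.alt (.cm w t) (.cm w (altList (u :: us)))) :=
            (Deriv.cmCongr (Deriv.refl w) altList_cons).trans
              (Deriv.CM9 w t (altList (u :: us)))
          exact h1.trans ((Deriv.altCongr (Deriv.refl _) (ih (by simp))).trans
            altList_cons.symm)

lemma d_par_comm {x y : Tm A} : Dv γ (.par x y) (.par y x) :=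
  Deriv.extra (SCAx.parComm x y)

lemma d_par_assoc {x y z : Tm A} : Dv γ (.par (.par x y) z) (.par x (.par y z)) :=
  Deriv.extra (SCAx.parAssoc x y z)

lemma d_lm_assoc {x y z : Tm A} : Dv γ (.lm (.lm x y) z) (.lm x (.par y z)) :=
  Deriv.extra (SCAx.lmAssoc x y z)

lemma d_cm_assoc {x y z : Tm A} : Dv γ (.cm (.cm x y) z) (.cm x (.cm y z)) :=
  Deriv.extra (SCAx.cmAssoc x y z)

lemma d_cm_lm {x y z : Tm A} : Dv γ (.cm x (.lm y z)) (.lm (.cm x y) z) :=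
  Deriv.extra (SCAx.cmLm x y z)

lemma sel_nil_mem {α : Type} {m : List α} {k : α} (h : (k, ([] : List α)) ∈ sel m) :
    m = [k] := by
  cases m with
  | nil => simp [sel] at h
  | cons b m1 =>
      simp only [sel, List.mem_cons, List.mem_map] at h
      rcases h with h | ⟨p, _, hp⟩
      · rw [Prod.mk.injEq] at h
        obtain ⟨rfl, rfl⟩ := h
        rfl
      · rw [Prod.mk.injEq] at hp
        exact absurd hp.2 (by simp)

/-- Pulling a selected element to the front of a parallel composition. -/
lemma sel_par {ι : Type} (x : ι → Tm A) :
    ∀ {m : List ι} {k : ι} {r : List ι}, (k, r) ∈ sel m → r ≠ [] →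
    Dv γ (parList (m.map x)) (.par (x k) (parList (r.map x))) := by
  intro m
  induction m with
  | nil => intro k r h _; simp [sel] at h
  | cons a m0 ih =>
      intro k r h hr
      simp only [sel, List.mem_cons, List.mem_map] at h
      rcases h with h | ⟨p, hp, hpe⟩
      · rw [Prod.mk.injEq] at h
        obtain ⟨rfl, rfl⟩ := h
        rw [List.map_cons, parList_cons_ne (by simpa using hr)]
        exact Deriv.refl _
      · obtain ⟨p1, p2⟩ := p
        rw [Prod.mk.injEq] at hpe
        obtain ⟨rfl, hpe2⟩ := hpe.symm.imp Eq.symm Eq.symm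
        subst hpe2
        have hp' : (k, p2) ∈ sel m0 := hp
        cases p2 with
        | nil =>
            obtain rfl := sel_nil_mem hp'
            exact d_par_comm
        | cons c cs =>
            have hm0 : m0 ≠ [] := by
              intro hh; rw [hh] at hp'; simp [sel] at hp'
            have hIH : Dv γ (parList (m0.map x))
                (.par (x k) (parList ((c :: cs).map x))) := ih hp' (by simp)
            rw [List.map_cons, parList_cons_ne (by simpa using hm0),
              List.map_cons, parList_cons_ne (by simp)]
            rw [List.map_cons] at hIH
            exact (Deriv.parCongr (Deriv.refl (x a)) hIH).trans
              (d_par_assoc.symm.trans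
                ((Deriv.parCongr d_par_comm (Deriv.refl _)).trans d_par_assoc))

section PlainAbsorb

variable (hγdelta : ∀ a : ATD A, γ ATD.delta a = ATD.delta)
  (hg3 : ∀ a b c : ATD A, γ (γ a b) c = ATD.delta)

include hγdelta hg3 in
lemma absorb_triple {X Y Z : Tm A} (hX : Tm.Plain X) (hY : Tm.Plain Y)
    (hZ : Tm.Plain Z) : Sb γ (.cm (.cm X Y) Z) (.lm (.cm X Y) Z) := by
  obtain ⟨bX, hbX, hDX⟩ := plain_elim hX
  obtain ⟨bY, hbY, hDY⟩ := plain_elim hY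
  obtain ⟨bZ, hbZ, hDZ⟩ := plain_elim hZ
  have h := (absorb hγdelta hg3 (sz bX + sz bY + sz bZ)).1 bX bY bZ hbX hbY hbZ le_rfl
  exact sb_congr (Deriv.cmCongr (Deriv.cmCongr hDX hDY) hDZ).symm
    (Deriv.lmCongr (Deriv.cmCongr hDX hDY) hDZ).symm h

include hγdelta hg3 in
lemma absorb_quad {X Y Z W : Tm A} (hX : Tm.Plain X) (hY : Tm.Plain Y)
    (hZ : Tm.Plain Z) (hW : Tm.Plain W) :
    Sb γ (.lm (.cm (.cm X Y) Z) W) (.lm (.cm X Y) (.par Z W)) := by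
  obtain ⟨bX, hbX, hDX⟩ := plain_elim hX
  obtain ⟨bY, hbY, hDY⟩ := plain_elim hY
  obtain ⟨bZ, hbZ, hDZ⟩ := plain_elim hZ
  obtain ⟨bW, hbW, hDW⟩ := plain_elim hW
  have h := (absorb hγdelta hg3 (sz bX + sz bY + sz bZ + sz bW)).2 bX bY bZ bW
    hbX hbY hbZ hbW le_rfl
  exact sb_congr
    (Deriv.lmCongr (Deriv.cmCongr (Deriv.cmCongr hDX hDY) hDZ) hDW).symm
    (Deriv.lmCongr (Deriv.cmCongr hDX hDY) (Deriv.parCongr hDZ hDW)).symm h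

end PlainAbsorb

lemma sel_ne_nil {α : Type} {l : List α} (h : l ≠ []) : sel l ≠ [] := by
  cases l with
  | nil => exact absurd rfl h
  | cons a l => simp [sel]

lemma sel2_ne_nil {α : Type} {a b : α} {l : List α} :
    sel2 (a :: b :: l) ≠ [] := by
  simp [sel2, sel]

section MainExpansion

variable {ι : Type} (hγdelta : ∀ a : ATD A, γ ATD.delta a = ATD.delta)
  (hg3 : ∀ a b c : ATD A, γ (γ a b) c = ATD.delta)

include hγdelta hg3 in
/-- The expansion theorem at the level of index lists. -/
lemma main_exp : ∀ (l : List ι) (x : ι → Tm A),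
    (∀ i ∈ l, Tm.Plain (x i)) → 3 ≤ l.length →
    Dv γ (parList (l.map x))
      (.alt
        (altList ((sel l).map (fun p => .lm (x p.1) (parList (p.2.map x)))))
        (altList ((sel2 l).map (fun q =>
          .lm (.cm (x q.1) (x q.2.1)) (parList (q.2.2.map x)))))) := by
  intro l
  induction l with
  | nil => intro x _ hlen; simp at hlen
  | cons a l' ih =>
      intro x hpl hlen
      have hX : Tm.Plain (x a) := hpl a (by simp)
      have hpl' : ∀ i ∈ l', Tm.Plain (x i) := fun i hi => hpl i (by simp [hi])
      have hl'2 : 2 ≤ l'.length := by simpa using hlen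
      have hl'ne : l' ≠ [] := by
        intro hh; rw [hh] at hl'2; simp at hl'2
      -- abbreviations
      set X := x a with hXdef
      have hLHS0 : parList ((a :: l').map x) = .par X (parList (l'.map x)) := by
        rw [List.map_cons, parList_cons_ne (by simpa using hl'ne)]
      set PM := parList (l'.map x) with hPMdef
      set T1 := altList ((sel l').map
        (fun p => Tm.lm (x p.1) (parList ((a :: p.2).map x)))) with hT1
      set T2 := altList ((sel2 l').map (fun q =>
        Tm.lm (.cm (x q.1) (x q.2.1)) (parList ((a :: q.2.2).map x)))) with hT2
      set T3 := altList ((sel l').map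
        (fun p => Tm.lm (.cm X (x p.1)) (parList (p.2.map x)))) with hT3
      -- the two main cases
      rcases Nat.lt_or_ge l'.length 3 with hsmall | hbig
      · -- base case : l' has exactly two elements
        obtain ⟨b, c, rfl⟩ : ∃ b c, l' = [b, c] := by
          cases l' with
          | nil => simp at hl'2
          | cons b t =>
              cases t with
              | nil => simp at hl'2
              | cons c t2 =>
                  cases t2 with
                  | nil => exact ⟨b, c, rfl⟩
                  | cons d t3 => simp at hsmall; omega
        set Y := x b with hYdef
        set Z := x c with hZdef
        have hYp : Tm.Plain Y := hpl' b (by simp)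
        have hZp : Tm.Plain Z := hpl' c (by simp)
        have hPM : Dv γ PM (.alt (.alt (.lm Y Z) (.lm Z Y)) (.cm Y Z)) :=
          Deriv.CM1 Y Z
        have hPMX : Dv γ (.lm PM X) (.alt T1 T2) := by
          refine ((Deriv.lmCongr hPM (Deriv.refl X)).trans
            (Deriv.CM4 _ _ X)).trans (Deriv.altCongr ?_ ?_)
          · -- (Y⌊Z + Z⌊Y)⌊X  →  Y⌊(X∥Z) + Z⌊(X∥Y)
            refine (Deriv.CM4 _ _ X).trans (Deriv.altCongr ?_ ?_)
            · exact d_lm_assoc.trans (Deriv.lmCongr (Deriv.refl Y) d_par_comm)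
            · exact d_lm_assoc.trans (Deriv.lmCongr (Deriv.refl Z) d_par_comm)
          · -- (Y|Z)⌊X is T2
            exact Deriv.refl _
        have hXPM : Dv γ (.cm X PM) (.alt T3 (.cm X (.cm Y Z))) := by
          refine ((Deriv.cmCongr (Deriv.refl X) hPM).trans
            (Deriv.CM9 X _ _)).trans (Deriv.altCongr ?_ (Deriv.refl _))
          refine (Deriv.CM9 X _ _).trans (Deriv.altCongr ?_ ?_)
          · exact d_cm_lm
          · exact d_cm_lm
        have hS : Dv γ (parList ((a :: [b, c]).map x))
            (.alt (.alt (.lm X PM) (.alt T1 T2))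
              (.alt T3 (.cm X (.cm Y Z)))) := by
          rw [hLHS0]
          exact (Deriv.CM1 X PM).trans
            (Deriv.altCongr (Deriv.altCongr (Deriv.refl _) hPMX) hXPM)
        have hE1 : Dv γ (altList ((sel (a :: [b, c])).map
            (fun p => Tm.lm (x p.1) (parList (p.2.map x)))))
            (.alt (.lm X PM) T1) := altList_cons
        have hE2 : Dv γ (altList ((sel2 (a :: [b, c])).map (fun q =>
            Tm.lm (.cm (x q.1) (x q.2.1)) (parList (q.2.2.map x)))))
            (.alt T3 T2) := by
          have hsel2 : sel2 (a :: [b, c]) =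
              (sel [b, c]).map (fun p => (a, p.1, p.2)) ++
              (sel2 [b, c]).map (fun q => (q.1, q.2.1, a :: q.2.2)) := rfl
          rw [hsel2, List.map_append, List.map_map, List.map_map]
          exact altList_append
        have hAbs : Sb γ (.cm X (.cm Y Z))
            (.alt (.alt (.lm X PM) T1) (.alt T3 T2)) := by
          have h1 : Sb γ (.cm (.cm X Y) Z) (.lm (.cm X Y) Z) :=
            absorb_triple hγdelta hg3 hX hYp hZp
          have h2 : Sb γ (.lm (.cm X Y) Z) T3 := by
            refine sb_congr (Deriv.refl _) (Deriv.refl _) (sb_inl sb_refl)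
          exact sb_congr d_cm_assoc (Deriv.refl _)
            (sb_inr (sb_inl (sb_trans h1 h2)))
        have hSb1 : Sb γ (.alt (.alt (.lm X PM) (.alt T1 T2))
              (.alt T3 (.cm X (.cm Y Z))))
            (.alt (.alt (.lm X PM) T1) (.alt T3 T2)) := by
          refine sb_alt (sb_alt (sb_inl (sb_inl sb_refl))
            (sb_alt (sb_inl (sb_inr sb_refl)) (sb_inr (sb_inr sb_refl)))) ?_
          exact sb_alt (sb_inr (sb_inl sb_refl)) hAbs
        have hSb2 : Sb γ (.alt (.alt (.lm X PM) T1) (.alt T3 T2))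
            (.alt (.alt (.lm X PM) (.alt T1 T2))
              (.alt T3 (.cm X (.cm Y Z)))) := by
          refine sb_alt (sb_alt (sb_inl (sb_inl sb_refl))
            (sb_inl (sb_inr (sb_inl sb_refl)))) ?_
          exact sb_alt (sb_inr (sb_inl sb_refl)) (sb_inl (sb_inr (sb_inr sb_refl)))
        exact hS.trans ((d_of_sb_sb hSb1 hSb2).trans
          (Deriv.altCongr hE1 hE2).symm)
      · -- inductive step : l' has at least three elements
        set J := altList ((sel2 l').map (fun q =>
          Tm.lm (.cm (.cm X (x q.1)) (x q.2.1)) (parList (q.2.2.map x)))) with hJ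
        have hPM : Dv γ PM
            (.alt (altList ((sel l').map
                (fun p => Tm.lm (x p.1) (parList (p.2.map x)))))
              (altList ((sel2 l').map (fun q =>
                Tm.lm (.cm (x q.1) (x q.2.1)) (parList (q.2.2.map x)))))) :=
          ih x hpl' hbig
        have hselne : (sel l').map
            (fun p => Tm.lm (x p.1) (parList (p.2.map x))) ≠ [] := by
          simpa using sel_ne_nil hl'ne
        have hsel2ne : (sel2 l').map (fun q =>
            Tm.lm (.cm (x q.1) (x q.2.1)) (parList (q.2.2.map x))) ≠ [] := by
          obtain ⟨b, t, rfl⟩ : ∃ b t, l' = b :: t := by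
            cases l' with
            | nil => exact absurd rfl hl'ne
            | cons b t => exact ⟨b, t, rfl⟩
          obtain ⟨c, t2, rfl⟩ : ∃ c t2, t = c :: t2 := by
            cases t with
            | nil => simp at hbig
            | cons c t2 => exact ⟨c, t2, rfl⟩
          simpa using sel2_ne_nil
        have hPMX : Dv γ (.lm PM X) (.alt T1 T2) := by
          refine ((Deriv.lmCongr hPM (Deriv.refl X)).trans
            (Deriv.CM4 _ _ X)).trans (Deriv.altCongr ?_ ?_)
          · refine ((lm_altList_distrib hselne X).trans ?_)
            rw [List.map_map, hT1]
            refine altList_map_congr ?_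
            intro p hp
            have hlen := sel_mem_len hp
            have hne : p.2.map x ≠ [] := by
              intro hh
              have h0 : p.2.length = 0 := by simpa using congrArg List.length hh
              omega
            show Dv γ (.lm (.lm (x p.1) (parList (p.2.map x))) X) _
            rw [List.map_cons, parList_cons_ne hne]
            exact d_lm_assoc.trans (Deriv.lmCongr (Deriv.refl _) d_par_comm)
          · refine ((lm_altList_distrib hsel2ne X).trans ?_)
            rw [List.map_map, hT2]
            refine altList_map_congr ?_
            intro q hq
            have hlen := (sel2_mem hq).2.2.2
            have hne : q.2.2.map x ≠ [] := by
              intro hh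
              have h0 : q.2.2.length = 0 := by simpa using congrArg List.length hh
              omega
            show Dv γ (.lm (.lm (.cm (x q.1) (x q.2.1))
              (parList (q.2.2.map x))) X) _
            rw [List.map_cons, parList_cons_ne hne]
            exact d_lm_assoc.trans (Deriv.lmCongr (Deriv.refl _) d_par_comm)
        have hXPM : Dv γ (.cm X PM) (.alt T3 J) := by
          refine ((Deriv.cmCongr (Deriv.refl X) hPM).trans
            (Deriv.CM9 X _ _)).trans (Deriv.altCongr ?_ ?_)
          · refine ((cm_altList_distrib hselne X).trans ?_)
            rw [List.map_map, hT3]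
            refine altList_map_congr ?_
            intro p hp
            exact d_cm_lm
          · refine ((cm_altList_distrib hsel2ne X).trans ?_)
            rw [List.map_map, hJ]
            refine altList_map_congr ?_
            intro q hq
            exact d_cm_lm.trans (Deriv.lmCongr d_cm_assoc.symm (Deriv.refl _))
        have hS : Dv γ (parList ((a :: l').map x))
            (.alt (.alt (.lm X PM) (.alt T1 T2)) (.alt T3 J)) := by
          rw [hLHS0]
          exact (Deriv.CM1 X PM).trans
            (Deriv.altCongr (Deriv.altCongr (Deriv.refl _) hPMX) hXPM)
        have hE1 : Dv γ (altList ((sel (a :: l')).map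
            (fun p => Tm.lm (x p.1) (parList (p.2.map x)))))
            (.alt (.lm X PM) T1) := by
          have hsel : sel (a :: l') = (a, l') ::
              (sel l').map (fun p => (p.1, a :: p.2)) := rfl
          rw [hsel, List.map_cons, List.map_map]
          exact altList_cons
        have hE2 : Dv γ (altList ((sel2 (a :: l')).map (fun q =>
            Tm.lm (.cm (x q.1) (x q.2.1)) (parList (q.2.2.map x)))))
            (.alt T3 T2) := by
          have hsel2 : sel2 (a :: l') =
              (sel l').map (fun p => (a, p.1, p.2)) ++
              (sel2 l').map (fun q => (q.1, q.2.1, a :: q.2.2)) := rfl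
          rw [hsel2, List.map_append, List.map_map, List.map_map]
          exact altList_append
        have hAbs : Sb γ J (.alt (.alt (.lm X PM) T1) (.alt T3 T2)) := by
          refine sb_altList ?_
          intro t ht
          obtain ⟨q, hq, rfl⟩ := List.mem_map.mp ht
          obtain ⟨j, k, r⟩ := q
          obtain ⟨rj, hrj, hkr⟩ := sel2_prov hq
          obtain ⟨hjm, hkm, hrm, hrlen⟩ := sel2_mem hq
          have hrne : r ≠ [] := by
            intro hh
            rw [hh] at hrlen
            simp at hrlen
            omega
          have hsel : Dv γ (parList (rj.map x)) (.par (x k) (parList (r.map x))) :=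
            sel_par x hkr hrne
          have hquad : Sb γ (.lm (.cm (.cm X (x j)) (x k)) (parList (r.map x)))
              (.lm (.cm X (x j)) (.par (x k) (parList (r.map x)))) :=
            absorb_quad hγdelta hg3 hX (hpl' j hjm) (hpl' k hkm)
              (parList_plain (by
                intro u hu
                obtain ⟨i, hi, rfl⟩ := List.mem_map.mp hu
                exact hpl' i (hrm i hi)))
          have h2 : Sb γ (.lm (.cm (.cm X (x j)) (x k)) (parList (r.map x)))
              (.lm (.cm X (x j)) (parList (rj.map x))) :=
            sb_congr (Deriv.refl _) (Deriv.lmCongr (Deriv.refl _) hsel.symm) hquad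
          have h3 : Sb γ (.lm (.cm X (x j)) (parList (rj.map x))) T3 :=
            sb_of_mem_altList (List.mem_map.mpr ⟨(j, rj), hrj, rfl⟩)
          exact sb_inr (sb_inl (sb_trans h2 h3))
        have hSb1 : Sb γ (.alt (.alt (.lm X PM) (.alt T1 T2)) (.alt T3 J))
            (.alt (.alt (.lm X PM) T1) (.alt T3 T2)) := by
          refine sb_alt (sb_alt (sb_inl (sb_inl sb_refl))
            (sb_alt (sb_inl (sb_inr sb_refl)) (sb_inr (sb_inr sb_refl)))) ?_
          exact sb_alt (sb_inr (sb_inl sb_refl)) hAbs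
        have hSb2 : Sb γ (.alt (.alt (.lm X PM) T1) (.alt T3 T2))
            (.alt (.alt (.lm X PM) (.alt T1 T2)) (.alt T3 J)) := by
          refine sb_alt (sb_alt (sb_inl (sb_inl sb_refl))
            (sb_inl (sb_inr (sb_inl sb_refl)))) ?_
          exact sb_alt (sb_inr (sb_inl sb_refl)) (sb_inl (sb_inr (sb_inr sb_refl)))
        exact hS.trans ((d_of_sb_sb hSb1 hSb2).trans
          (Deriv.altCongr hE1 hE2).symm)

end MainExpansion

lemma sel_eq_filter {α : Type} [DecidableEq α] :
    ∀ {l : List α}, l.Nodup →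
    sel l = l.map (fun i => (i, l.filter (fun j => decide (j ≠ i)))) := by
  intro l
  induction l with
  | nil => intro _; rfl
  | cons a t ih =>
      intro h
      have ha : a ∉ t := (List.nodup_cons.mp h).1
      have ht : t.Nodup := (List.nodup_cons.mp h).2
      show (a, t) :: (sel t).map (fun p => (p.1, a :: p.2)) = _
      rw [List.map_cons]
      congr 1
      · have : (a :: t).filter (fun j => decide (j ≠ a)) = t := by
          rw [List.filter_cons_of_neg (by simp)]
          exact List.filter_eq_self.mpr (fun b hb => by
            simp only [ne_eq, decide_eq_true_eq]
            intro hba; exact ha (hba ▸ hb))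
        rw [this]
      · rw [ih ht, List.map_map]
        refine List.map_congr_left ?_
        intro i hi
        have hai : a ≠ i := fun hh => ha (hh ▸ hi)
        simp only [Function.comp]
        congr 1
        rw [List.filter_cons]
        simp [hai]

lemma sel2_eq_filter {n : ℕ} :
    ∀ {l : List (Fin n)}, l.Pairwise (· < ·) →
    sel2 l = l.flatMap (fun i => (l.filter (fun j => decide (i < j))).map
      (fun j => (i, j, l.filter (fun k => decide (k ≠ i ∧ k ≠ j))))) := by
  intro l
  induction l with
  | nil => intro _; rfl
  | cons a t ih =>
      intro h
      have ha : ∀ b ∈ t, a < b := List.pairwise_cons.mp h |>.1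
      have ht : t.Pairwise (· < ·) := (List.pairwise_cons.mp h).2
      have htnd : t.Nodup := ht.imp ne_of_lt
      rw [List.flatMap_cons]
      show (sel t).map (fun p => (a, p.1, p.2)) ++
        (sel2 t).map (fun q => (q.1, q.2.1, a :: q.2.2)) = _
      congr 1
      · -- first block
        have h1 : (a :: t).filter (fun j => decide (a < j)) = t := by
          rw [List.filter_cons_of_neg (by simp)]
          exact List.filter_eq_self.mpr (fun b hb => by
            simpa using ha b hb)
        rw [h1, sel_eq_filter htnd, List.map_map]
        refine List.map_congr_left ?_
        intro j hj
        have haj : a ≠ j := ne_of_lt (ha j hj)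
        simp only [Function.comp]
        refine congrArg (fun z => (a, j, z)) ?_
        rw [List.filter_cons_of_neg (by simp)]
        refine List.filter_congr ?_
        intro k hk
        have hka : k ≠ a := fun hh => absurd (hh ▸ ha k hk) (lt_irrefl a)
        simp [hka]
      · -- second block
        rw [ih ht, List.map_flatMap]
        refine List.flatMap_congr ?_  -- may not exist; fallback below
        intro i hi
        have hai : a < i := ha i hi
        have h1 : (a :: t).filter (fun j => decide (i < j)) =
            t.filter (fun j => decide (i < j)) := by
          rw [List.filter_cons]
          simp [not_lt_of_gt hai, asymm hai]
        rw [h1, List.map_map]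
        refine List.map_congr_left ?_
        intro j hj
        have hjt : j ∈ t := (List.mem_filter.mp hj).1
        have haj : a ≠ j := ne_of_lt (ha j hjt)
        have hai' : a ≠ i := ne_of_lt hai
        simp only [Function.comp]
        refine congrArg (fun z => (i, j, z)) ?_
        rw [List.filter_cons]
        simp [hai', haj]

end Expn

/-- The handshaking expansion theorem for ACP_drt^τ: under handshaking
communication, with the axioms of standard concurrency and the handshaking
axiom, for every n > 2 the expansion
x₁ ∥ ⋯ ∥ xₙ = Σᵢ xᵢ ⌊ (∥_{j≠i} xⱼ) + Σ_{i<j} (xᵢ | xⱼ) ⌊ (∥_{k≠i,k≠j} xₖ)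
is derivable. -/
theorem expansion_theorem {A : Type} [Fintype A] (γ : ATD A → ATD A → ATD A)
    (hγcomm : ∀ a b, γ a b = γ b a)
    (hγassoc : ∀ a b c, γ (γ a b) c = γ a (γ b c))
    (hγtau : ∀ a, γ ATD.tau a = ATD.delta)
    (hγdelta : ∀ a, γ ATD.delta a = ATD.delta)
    (hhandshaking : ∀ a b c : A, γ (γ (.act a) (.act b)) (.act c) = ATD.delta)
    (n : ℕ) (hn : n > 2) (x : Fin n → Tm A) (hx : ∀ i, Tm.Plain (x i)) :
    Deriv γ SCAx false
      (parList ((List.finRange n).map x))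
      (.alt
        (altList ((List.finRange n).map (fun i =>
          .lm (x i) (parList (((List.finRange n).filter
            (fun j => decide (j ≠ i))).map x)))))
        (altList ((List.finRange n).flatMap (fun i =>
          ((List.finRange n).filter (fun j => decide (i < j))).map (fun j =>
            Tm.lm (.cm (x i) (x j)) (parList (((List.finRange n).filter
              (fun k => decide (k ≠ i ∧ k ≠ j))).map x))))))) := by
  have hg3 : ∀ a b c : ATD A, γ (γ a b) c = ATD.delta :=
    Expn.gamma3 hγcomm hγtau hγdelta hhandshaking
  have h := Expn.main_exp (ι := Fin n) hγdelta hg3 (List.finRange n) x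
    (fun i _ => hx i) (by simp; omega)
  rw [Expn.sel_eq_filter (List.nodup_finRange n),
    Expn.sel2_eq_filter (List.pairwise_lt_finRange n)] at h
  simp only [List.map_map, List.map_flatMap, Function.comp_def] at h
  exact h
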